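/- arXiv:1704.02728 — 4 statements merged into one kernel-verified Lean document; each statement's English description precedes it below -/
import Mathlib

section
/- Let Ω ⊂ ℝⁿ be a nonempty bounded domain, let w, z ∈ C(Ω̄) with w(x) > 0 and z(x) < 0 for all x ∈ Ω̄, and let b, c, b₁, c₁ ∈ C(Ω̄) be positive functions satisfying (max_{Ω̄} b)·(max_{Ω̄} c) ≤ (min_{Ω̄} b₁)·(min_{Ω̄} c₁). If ∫_Ω (b₁ w + c z) w² dx ≤ 0 and ∫_Ω (b w + c₁ z) z² dx ≥ 0, then b, c, b₁, c₁ are constant functions on Ω̄, their values satisfy b·c = b₁·c₁, and b₁·w(x) + c·z(x) = 0 for every x ∈ Ω̄. -/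
open MeasureTheory Topology Filter

noncomputable section

abbrev Pt (n : ℕ) := EuclideanSpace ℝ (Fin n)

def IsBoundedDomain {n : ℕ} (Ω : Set (Pt n)) : Prop :=
  IsOpen Ω ∧ IsConnected Ω ∧ Bornology.IsBounded Ω

def IsDispersalKernel {n : ℕ} (k : Pt n → Pt n → ℝ) : Prop :=
  Continuous (Function.uncurry k) ∧ (∀ x y, 0 ≤ k x y) ∧ (∀ x, 0 < k x x) ∧
  (∀ x, (∫ y, k x y) = 1) ∧ (∀ x, (∫ y, k y x) = 1)

def SymmKernel {n : ℕ} (k : Pt n → Pt n → ℝ) : Prop := ∀ x y, k x y = k y x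

def nlOp {n : ℕ} (Ω : Set (Pt n)) (k : Pt n → Pt n → ℝ) (φ : Pt n → ℝ) (x : Pt n) : ℝ :=
  (∫ y in Ω, k x y * φ y) - (∫ y in Ω, k y x) * φ x

def Nonconstant {n : ℕ} (Ω : Set (Pt n)) (m : Pt n → ℝ) : Prop :=
  ¬ ∃ a : ℝ, ∀ x ∈ closure Ω, m x = a

def SemiTrivialProfile {n : ℕ} (Ω : Set (Pt n)) (k : Pt n → Pt n → ℝ) (d : ℝ)
    (m u : Pt n → ℝ) : Prop :=
  ContinuousOn u (closure Ω) ∧ (∀ x ∈ closure Ω, 0 < u x) ∧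
  ∀ x ∈ closure Ω, d * nlOp Ω k u x + u x * (m x - u x) = 0

def stabIdx {n : ℕ} (Ω : Set (Pt n)) (p : Pt n → Pt n → ℝ) (D : ℝ) (q : Pt n → ℝ) : ℝ :=
  sSup {r : ℝ | ∃ ψ : Pt n → ℝ, MemLp ψ 2 (volume.restrict Ω) ∧
    ¬ ψ =ᵐ[volume.restrict Ω] (fun _ => (0:ℝ)) ∧
    r = (∫ x in Ω, (D * ψ x * nlOp Ω p ψ x + q x * ψ x ^ 2)) / (∫ x in Ω, ψ x ^ 2)}

def IsSteadyState {n : ℕ} (Ω : Set (Pt n)) (k p : Pt n → Pt n → ℝ)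
    (d D b c : ℝ) (m M u v : Pt n → ℝ) : Prop :=
  ContinuousOn u (closure Ω) ∧ ContinuousOn v (closure Ω) ∧
  (∀ x ∈ closure Ω, d * nlOp Ω k u x + u x * (m x - u x - c * v x) = 0) ∧
  (∀ x ∈ closure Ω, D * nlOp Ω p v x + v x * (M x - b * u x - v x) = 0)

def IsPositiveSteadyState {n : ℕ} (Ω : Set (Pt n)) (k p : Pt n → Pt n → ℝ)
    (d D b c : ℝ) (m M u v : Pt n → ℝ) : Prop :=
  IsSteadyState Ω k p d D b c m M u v ∧
  (∀ x ∈ closure Ω, 0 < u x) ∧ (∀ x ∈ closure Ω, 0 < v x)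

def IsBoundedClassicalSolution {n : ℕ} (Ω : Set (Pt n)) (k p : Pt n → Pt n → ℝ)
    (d D b c : ℝ) (m M : Pt n → ℝ) (u v : Pt n → ℝ → ℝ) : Prop :=
  ContinuousOn (fun q : Pt n × ℝ => u q.1 q.2) (closure Ω ×ˢ Set.Ici 0) ∧
  ContinuousOn (fun q : Pt n × ℝ => v q.1 q.2) (closure Ω ×ˢ Set.Ici 0) ∧
  (∃ C : ℝ, ∀ x ∈ closure Ω, ∀ t ≥ (0:ℝ), |u x t| ≤ C ∧ |v x t| ≤ C) ∧
  (∀ x ∈ closure Ω, ∀ t ≥ (0:ℝ), DifferentiableWithinAt ℝ (u x) (Set.Ici 0) t ∧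
      DifferentiableWithinAt ℝ (v x) (Set.Ici 0) t) ∧
  (∀ x ∈ closure Ω, ∀ t > (0:ℝ),
      HasDerivAt (u x)
        (d * nlOp Ω k (fun y => u y t) x + u x t * (m x - u x t - c * v x t)) t ∧
      HasDerivAt (v x)
        (D * nlOp Ω p (fun y => v y t) x + v x t * (M x - b * u x t - v x t)) t)


lemma zero_of_nonneg_integral_nonpos {n : ℕ} {Ω : Set (Pt n)} (hopen : IsOpen Ω)
    (f : Pt n → ℝ) (hf : ContinuousOn f Ω) (hnn : ∀ x ∈ Ω, 0 ≤ f x)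
    (hint : IntegrableOn f Ω) (hle : (∫ x in Ω, f x) ≤ 0) : ∀ x ∈ Ω, f x = 0 := by
  by_contra hcon
  push_neg at hcon
  obtain ⟨x₀, hx₀, hne⟩ := hcon
  have hpos : 0 < f x₀ := lt_of_le_of_ne (hnn x₀ hx₀) (Ne.symm hne)
  have hU : IsOpen (Ω ∩ f ⁻¹' Set.Ioi 0) := hf.isOpen_inter_preimage hopen isOpen_Ioi
  have hUne : (Ω ∩ f ⁻¹' Set.Ioi 0).Nonempty := ⟨x₀, hx₀, hpos⟩
  have hμU : 0 < volume (Ω ∩ f ⁻¹' Set.Ioi 0) := hU.measure_pos volume hUne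
  have hsub : Ω ∩ f ⁻¹' Set.Ioi 0 ⊆ Function.support f ∩ Ω := by
    rintro x ⟨hx1, hx2⟩; exact ⟨ne_of_gt hx2, hx1⟩
  have hae : 0 ≤ᵐ[volume.restrict Ω] f := by
    have h : ∀ᵐ x ∂(volume.restrict Ω), 0 ≤ f x :=
      (MeasureTheory.ae_restrict_iff' hopen.measurableSet).mpr
        (Filter.Eventually.of_forall hnn)
    filter_upwards [h] with x hx
    simpa using hx
  have := (MeasureTheory.setIntegral_pos_iff_support_of_nonneg_ae hae hint).mpr
    (lt_of_lt_of_le hμU (measure_mono hsub))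
  linarith

lemma eq_zero_on_closure {n : ℕ} {Ω : Set (Pt n)} (f : Pt n → ℝ)
    (hf : ContinuousOn f (closure Ω)) (h0 : ∀ x ∈ Ω, f x = 0) :
    ∀ x ∈ closure Ω, f x = 0 := by
  intro x hx
  have hne : (𝓝[Ω] x).NeBot := mem_closure_iff_nhdsWithin_neBot.mp hx
  have h1 : Filter.Tendsto f (𝓝[Ω] x) (𝓝 (f x)) :=
    ((hf x hx).mono subset_closure : ContinuousWithinAt f Ω x)
  have h2 : Filter.Tendsto f (𝓝[Ω] x) (𝓝 0) := by
    refine Filter.Tendsto.congr' ?_ tendsto_const_nhds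
    filter_upwards [self_mem_nhdsWithin] with y hy using (h0 y hy).symm
  exact tendsto_nhds_unique h1 h2

set_option maxHeartbeats 2000000 in
theorem stmt_11 {n : ℕ} (Ω : Set (Pt n)) (hΩ : IsBoundedDomain Ω)
    (w z b c b₁ c₁ : Pt n → ℝ)
    (hw : ContinuousOn w (closure Ω)) (hz : ContinuousOn z (closure Ω))
    (hwpos : ∀ x ∈ closure Ω, 0 < w x) (hzneg : ∀ x ∈ closure Ω, z x < 0)
    (hb : ContinuousOn b (closure Ω)) (hc : ContinuousOn c (closure Ω))
    (hb₁ : ContinuousOn b₁ (closure Ω)) (hc₁ : ContinuousOn c₁ (closure Ω))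
    (hbpos : ∀ x ∈ closure Ω, 0 < b x) (hcpos : ∀ x ∈ closure Ω, 0 < c x)
    (hb₁pos : ∀ x ∈ closure Ω, 0 < b₁ x) (hc₁pos : ∀ x ∈ closure Ω, 0 < c₁ x)
    (hcond : sSup (b '' closure Ω) * sSup (c '' closure Ω) ≤
             sInf (b₁ '' closure Ω) * sInf (c₁ '' closure Ω))
    (h1 : (∫ x in Ω, (b₁ x * w x + c x * z x) * w x ^ 2) ≤ 0)
    (h2 : 0 ≤ (∫ x in Ω, (b x * w x + c₁ x * z x) * z x ^ 2)) :
    (∀ x ∈ closure Ω, ∀ y ∈ closure Ω, b x = b y ∧ c x = c y ∧ b₁ x = b₁ y ∧ c₁ x = c₁ y) ∧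
    (∀ x ∈ closure Ω, b x * c x = b₁ x * c₁ x) ∧
    (∀ x ∈ closure Ω, b₁ x * w x + c x * z x = 0) := by
  obtain ⟨hopen, hconn, hbdd⟩ := hΩ
  have hKcp : IsCompact (closure Ω) := hbdd.isCompact_closure
  have hΩne : Ω.Nonempty := hconn.nonempty
  have hmeas : MeasurableSet Ω := hopen.measurableSet
  have hsubK : Ω ⊆ closure Ω := subset_closure
  have hKne : (closure Ω).Nonempty := hΩne.closure
  set B := sSup (b '' closure Ω) with hBdef
  set C := sSup (c '' closure Ω) with hCdef
  set B₁ := sInf (b₁ '' closure Ω) with hB₁def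
  set C₁ := sInf (c₁ '' closure Ω) with hC₁def
  have hbB : ∀ x ∈ closure Ω, b x ≤ B := fun x hx =>
    le_csSup (hKcp.image_of_continuousOn hb).bddAbove ⟨x, hx, rfl⟩
  have hcC : ∀ x ∈ closure Ω, c x ≤ C := fun x hx =>
    le_csSup (hKcp.image_of_continuousOn hc).bddAbove ⟨x, hx, rfl⟩
  have hB₁b : ∀ x ∈ closure Ω, B₁ ≤ b₁ x := fun x hx =>
    csInf_le (hKcp.image_of_continuousOn hb₁).bddBelow ⟨x, hx, rfl⟩
  have hC₁c : ∀ x ∈ closure Ω, C₁ ≤ c₁ x := fun x hx =>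
    csInf_le (hKcp.image_of_continuousOn hc₁).bddBelow ⟨x, hx, rfl⟩
  obtain ⟨x₀, hx₀⟩ := hΩne
  have hx₀K : x₀ ∈ closure Ω := hsubK hx₀
  have hBpos : 0 < B := lt_of_lt_of_le (hbpos x₀ hx₀K) (hbB x₀ hx₀K)
  have hCpos : 0 < C := lt_of_lt_of_le (hcpos x₀ hx₀K) (hcC x₀ hx₀K)
  have hB₁pos : 0 < B₁ := by
    obtain ⟨y, hy, hyv⟩ := (hKcp.image_of_continuousOn hb₁).sInf_mem
      (hKne.image b₁)
    rw [hB₁def, ← hyv]; exact hb₁pos y hy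
  have hC₁pos : 0 < C₁ := by
    obtain ⟨y, hy, hyv⟩ := (hKcp.image_of_continuousOn hc₁).sInf_mem
      (hKne.image c₁)
    rw [hC₁def, ← hyv]; exact hc₁pos y hy
  have integ : ∀ f : Pt n → ℝ, ContinuousOn f (closure Ω) → IntegrableOn f Ω := fun f hf =>
    (hf.integrableOn_compact hKcp).mono_set hsubK
  set φ : Pt n → ℝ := fun x => B₁ * w x + C * z x with hφdef
  have hφcont : ContinuousOn φ (closure Ω) := (continuousOn_const.mul hw).add (continuousOn_const.mul hz)
  -- Step A : ∫ φ w² ≤ 0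
  have hA : (∫ x in Ω, φ x * w x ^ 2) ≤ 0 := by
    refine le_trans (MeasureTheory.setIntegral_mono_on ?_ ?_ hmeas ?_) h1
    · exact integ _ (hφcont.mul (hw.pow 2))
    · exact integ _ (((hb₁.mul hw).add (hc.mul hz)).mul (hw.pow 2))
    · intro x hx
      have hxK := hsubK hx
      have e1 : 0 ≤ (b₁ x - B₁) * w x * w x ^ 2 :=
        mul_nonneg (mul_nonneg (sub_nonneg.mpr (hB₁b x hxK)) (hwpos x hxK).le) (sq_nonneg _)
      have e2 : 0 ≤ (C - c x) * (-z x) * w x ^ 2 :=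
        mul_nonneg (mul_nonneg (sub_nonneg.mpr (hcC x hxK)) (neg_nonneg.mpr (hzneg x hxK).le)) (sq_nonneg _)
      simp only [hφdef]
      nlinarith [e1, e2]
  -- pointwise chain for step B/E : C*(b w + c₁ z) ≤ C*(B w + C₁ z) ≤ C₁ * φ  on closure Ω
  have hchain1 : ∀ x ∈ closure Ω, C * (b x * w x + c₁ x * z x) ≤ C * (B * w x + C₁ * z x) := by
    intro x hx
    have e1 : 0 ≤ (B - b x) * w x := mul_nonneg (sub_nonneg.mpr (hbB x hx)) (hwpos x hx).le
    have e2 : 0 ≤ (c₁ x - C₁) * (-z x) :=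
      mul_nonneg (sub_nonneg.mpr (hC₁c x hx)) (neg_nonneg.mpr (hzneg x hx).le)
    nlinarith [e1, e2, hCpos]
  have hchain2 : ∀ x ∈ closure Ω, C * (B * w x + C₁ * z x) ≤ C₁ * φ x := by
    intro x hx
    have e1 : 0 ≤ (B₁ * C₁ - B * C) * w x :=
      mul_nonneg (sub_nonneg.mpr hcond) (hwpos x hx).le
    simp only [hφdef]
    nlinarith [e1]
  -- Step B : 0 ≤ ∫ φ z²
  have hB2 : 0 ≤ (∫ x in Ω, φ x * z x ^ 2) := by
    have hle : (∫ x in Ω, C * ((b x * w x + c₁ x * z x) * z x ^ 2)) ≤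
        ∫ x in Ω, C₁ * (φ x * z x ^ 2) := by
      refine MeasureTheory.setIntegral_mono_on ?_ ?_ hmeas ?_
      · exact integ _ (continuousOn_const.mul (((hb.mul hw).add (hc₁.mul hz)).mul (hz.pow 2)))
      · exact integ _ (continuousOn_const.mul (hφcont.mul (hz.pow 2)))
      · intro x hx
        have hxK := hsubK hx
        have h1' := hchain1 x hxK
        have h2' := hchain2 x hxK
        nlinarith [sq_nonneg (z x), h1', h2']
    rw [MeasureTheory.integral_const_mul, MeasureTheory.integral_const_mul] at hle
    have h0 : 0 ≤ C₁ * (∫ x in Ω, φ x * z x ^ 2) := le_trans (mul_nonneg hCpos.le h2) hle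
    exact le_of_mul_le_mul_left (by linarith : C₁ * 0 ≤ C₁ * (∫ x in Ω, φ x * z x ^ 2)) hC₁pos
  -- Step C : φ ≡ 0 on Ω
  have hCzero : ∀ x ∈ Ω, φ x ^ 2 * (B₁ * w x - C * z x) = 0 := by
    refine zero_of_nonneg_integral_nonpos hopen _ ?_ ?_ ?_ ?_
    · exact (((hφcont.pow 2).mul ((continuousOn_const.mul hw).sub (continuousOn_const.mul hz))).mono hsubK)
    · intro x hx
      have hxK := hsubK hx
      have : 0 < B₁ * w x - C * z x := by
        nlinarith [mul_pos hB₁pos (hwpos x hxK), mul_pos hCpos (neg_pos.mpr (hzneg x hxK))]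
      exact mul_nonneg (sq_nonneg _) this.le
    · exact integ _ ((hφcont.pow 2).mul ((continuousOn_const.mul hw).sub (continuousOn_const.mul hz)))
    · have heq : (∫ x in Ω, φ x ^ 2 * (B₁ * w x - C * z x)) =
          B₁ ^ 2 * (∫ x in Ω, φ x * w x ^ 2) - C ^ 2 * (∫ x in Ω, φ x * z x ^ 2) := by
        rw [← MeasureTheory.integral_const_mul, ← MeasureTheory.integral_const_mul,
          ← MeasureTheory.integral_sub]
        · refine MeasureTheory.setIntegral_congr_fun hmeas fun x hx => ?_
          simp only [hφdef]; ring
        · exact (integ _ (hφcont.mul (hw.pow 2))).const_mul _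
        · exact (integ _ (hφcont.mul (hz.pow 2))).const_mul _
      rw [heq]
      nlinarith [hA, hB2, sq_nonneg B₁, sq_nonneg C]
  have hφΩ : ∀ x ∈ Ω, φ x = 0 := by
    intro x hx
    have hxK := hsubK hx
    have hpos : 0 < B₁ * w x - C * z x := by
      nlinarith [mul_pos hB₁pos (hwpos x hxK), mul_pos hCpos (neg_pos.mpr (hzneg x hxK))]
    have := hCzero x hx
    have hsq : φ x ^ 2 = 0 := by
      rcases mul_eq_zero.mp this with h | h
      · exact h
      · exact absurd h hpos.ne'
    exact pow_eq_zero_iff (by norm_num) |>.mp hsq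
  have hφK : ∀ x ∈ closure Ω, φ x = 0 := eq_zero_on_closure φ hφcont hφΩ
  -- Step D : b₁ = B₁ and c = C on Ω
  have hDzero : ∀ x ∈ Ω, (b₁ x * w x + c x * z x) * w x ^ 2 = 0 := by
    refine zero_of_nonneg_integral_nonpos hopen _ ?_ ?_ ?_ h1
    · exact (((hb₁.mul hw).add (hc.mul hz)).mul (hw.pow 2)).mono hsubK
    · intro x hx
      have hxK := hsubK hx
      have hφ0 := hφΩ x hx
      simp only [hφdef] at hφ0
      have e1 : 0 ≤ (b₁ x - B₁) * w x :=
        mul_nonneg (sub_nonneg.mpr (hB₁b x hxK)) (hwpos x hxK).le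
      have e2 : 0 ≤ (C - c x) * (-z x) :=
        mul_nonneg (sub_nonneg.mpr (hcC x hxK)) (neg_nonneg.mpr (hzneg x hxK).le)
      nlinarith [e1, e2, sq_nonneg (w x)]
    · exact integ _ (((hb₁.mul hw).add (hc.mul hz)).mul (hw.pow 2))
  have hb₁c : ∀ x ∈ Ω, b₁ x = B₁ ∧ c x = C := by
    intro x hx
    have hxK := hsubK hx
    have hφ0 := hφΩ x hx
    simp only [hφdef] at hφ0
    have hD := hDzero x hx
    have hw2 : 0 < w x ^ 2 := by nlinarith [hwpos x hxK]
    have hsum : (b₁ x - B₁) * w x + (C - c x) * (-z x) = 0 := by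
      have hD0 : b₁ x * w x + c x * z x = 0 := by
        rcases mul_eq_zero.mp hD with h | h
        · exact h
        · exact absurd h hw2.ne'
      linear_combination hD0 - hφ0
    have e1 : 0 ≤ (b₁ x - B₁) * w x :=
      mul_nonneg (sub_nonneg.mpr (hB₁b x hxK)) (hwpos x hxK).le
    have e2 : 0 ≤ (C - c x) * (-z x) :=
      mul_nonneg (sub_nonneg.mpr (hcC x hxK)) (neg_nonneg.mpr (hzneg x hxK).le)
    have t1 : (b₁ x - B₁) * w x = 0 := by linarith
    have t2 : (C - c x) * (-z x) = 0 := by linarith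
    constructor
    · rcases mul_eq_zero.mp t1 with h | h
      · linarith [sub_eq_zero.mp h]
      · exact absurd h (hwpos x hxK).ne'
    · rcases mul_eq_zero.mp t2 with h | h
      · linarith [sub_eq_zero.mp h]
      · exact absurd h (neg_pos.mpr (hzneg x hxK)).ne'
  -- Step E : b = B and c₁ = C₁ on Ω
  have hEzero : ∀ x ∈ Ω, -((b x * w x + c₁ x * z x) * z x ^ 2) = 0 := by
    refine zero_of_nonneg_integral_nonpos hopen _ ?_ ?_ ?_ ?_
    · exact ((((hb.mul hw).add (hc₁.mul hz)).mul (hz.pow 2)).neg).mono hsubK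
    · intro x hx
      have hxK := hsubK hx
      have h1' := hchain1 x hxK
      have h2' := hchain2 x hxK
      have hφ0 := hφK x hxK
      rw [hφ0, mul_zero] at h2'
      have hc0 : C * (b x * w x + c₁ x * z x) ≤ C * 0 := by rw [mul_zero]; linarith
      have hle0 : b x * w x + c₁ x * z x ≤ 0 := le_of_mul_le_mul_left hc0 hCpos
      have := mul_nonpos_of_nonpos_of_nonneg hle0 (sq_nonneg (z x))
      linarith
    · exact (integ _ (((hb.mul hw).add (hc₁.mul hz)).mul (hz.pow 2))).neg
    · rw [MeasureTheory.integral_neg]; linarith [h2]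
  have hbc₁ : ∀ x ∈ Ω, b x = B ∧ c₁ x = C₁ := by
    intro x hx
    have hxK := hsubK hx
    have hz2 : 0 < z x ^ 2 := by nlinarith [hzneg x hxK]
    have hsum0 : b x * w x + c₁ x * z x = 0 := by
      have hE := hEzero x hx
      have : (b x * w x + c₁ x * z x) * z x ^ 2 = 0 := by linarith
      rcases mul_eq_zero.mp this with h | h
      · exact h
      · exact absurd h hz2.ne'
    have hBC₁0 : B * w x + C₁ * z x = 0 := by
      have h1' := hchain1 x hxK
      have h2' := hchain2 x hxK
      have hφ0 := hφK x hxK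
      rw [hφ0, mul_zero] at h2'
      rw [hsum0, mul_zero] at h1'
      have hczero : C * (B * w x + C₁ * z x) = 0 := le_antisymm h2' h1'
      exact (mul_eq_zero.mp hczero).resolve_left hCpos.ne'
    have e1 : 0 ≤ (B - b x) * w x := mul_nonneg (sub_nonneg.mpr (hbB x hxK)) (hwpos x hxK).le
    have e2 : 0 ≤ (c₁ x - C₁) * (-z x) :=
      mul_nonneg (sub_nonneg.mpr (hC₁c x hxK)) (neg_nonneg.mpr (hzneg x hxK).le)
    have hsum : (B - b x) * w x + (c₁ x - C₁) * (-z x) = 0 := by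
      linear_combination hBC₁0 - hsum0
    have t1 : (B - b x) * w x = 0 := by linarith
    have t2 : (c₁ x - C₁) * (-z x) = 0 := by linarith
    constructor
    · rcases mul_eq_zero.mp t1 with h | h
      · linarith [sub_eq_zero.mp h]
      · exact absurd h (hwpos x hxK).ne'
    · rcases mul_eq_zero.mp t2 with h | h
      · linarith [sub_eq_zero.mp h]
      · exact absurd h (neg_pos.mpr (hzneg x hxK)).ne'
  -- extend constancy to closure
  have hbK : ∀ x ∈ closure Ω, b x = B := by
    intro x hx
    have := eq_zero_on_closure (fun y => b y - B) (hb.sub continuousOn_const)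
      (fun y hy => by simp [(hbc₁ y hy).1]) x hx
    have h' : b x - B = 0 := this
    linarith [h']
  have hcK : ∀ x ∈ closure Ω, c x = C := by
    intro x hx
    have := eq_zero_on_closure (fun y => c y - C) (hc.sub continuousOn_const)
      (fun y hy => by simp [(hb₁c y hy).2]) x hx
    have h' : c x - C = 0 := this
    linarith [h']
  have hb₁K : ∀ x ∈ closure Ω, b₁ x = B₁ := by
    intro x hx
    have := eq_zero_on_closure (fun y => b₁ y - B₁) (hb₁.sub continuousOn_const)
      (fun y hy => by simp [(hb₁c y hy).1]) x hx
    have h' : b₁ x - B₁ = 0 := this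
    linarith [h']
  have hc₁K : ∀ x ∈ closure Ω, c₁ x = C₁ := by
    intro x hx
    have := eq_zero_on_closure (fun y => c₁ y - C₁) (hc₁.sub continuousOn_const)
      (fun y hy => by simp [(hbc₁ y hy).2]) x hx
    have h' : c₁ x - C₁ = 0 := this
    linarith [h']
  -- B*C = B₁*C₁
  have hBC : B * C = B₁ * C₁ := by
    have e1 : B₁ * w x₀ + C * z x₀ = 0 := hφΩ x₀ hx₀
    have e2 : b x₀ * w x₀ + c₁ x₀ * z x₀ = 0 := by
      have hE := hEzero x₀ hx₀
      have hz2 : 0 < z x₀ ^ 2 := by nlinarith [hzneg x₀ hx₀K]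
      have : (b x₀ * w x₀ + c₁ x₀ * z x₀) * z x₀ ^ 2 = 0 := by linarith
      rcases mul_eq_zero.mp this with h | h
      · exact h
      · exact absurd h hz2.ne'
    rw [(hbc₁ x₀ hx₀).1, (hbc₁ x₀ hx₀).2] at e2
    have hw0 : 0 < w x₀ := hwpos x₀ hx₀K
    have key : (B * C - B₁ * C₁) * w x₀ = 0 := by linear_combination C * e2 - C₁ * e1
    rcases mul_eq_zero.mp key with h | h
    · linarith [sub_eq_zero.mp h]
    · exact absurd h hw0.ne'
  refine ⟨?_, ?_, ?_⟩
  · intro x hx y hy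
    exact ⟨by rw [hbK x hx, hbK y hy], by rw [hcK x hx, hcK y hy],
      by rw [hb₁K x hx, hb₁K y hy], by rw [hc₁K x hx, hc₁K y hy]⟩
  · intro x hx
    rw [hbK x hx, hcK x hx, hb₁K x hx, hc₁K x hx, hBC]
  · intro x hx
    rw [hb₁K x hx, hcK x hx]
    exact hφK x hx
end
end

section
/- Assume k and p are symmetric dispersal kernels, m, M ∈ C(Ω̄) are nonconstant, d, D, b, c > 0, and assume positive semi-trivial profiles u_d and v_D exist. Let (u,v) be a bounded classical solution of the competition system with u(x,0) > 0 and v(x,0) > 0 for all x ∈ Ω̄. (i) If u(·,t) does not converge weakly to 0 in L²(Ω) as t → ∞ (i.e., there is g ∈ L²(Ω) such that ∫_Ω u(x,t) g(x) dx does not tend to 0), then there exists T₁ > 0 such that v(x,t) < v_D(x) for all x ∈ Ω̄ and t ≥ T₁. (ii) If v(·,t) does not converge weakly to 0 in L²(Ω) as t → ∞, then there exists T₂ > 0 such that u(x,t) < u_d(x) for all x ∈ Ω̄ and t ≥ T₂. -/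
open MeasureTheory Topology Filter

noncomputable section

namespace Stmt12Aux

open Set Real

lemma scalar_mono (a b : ℝ) (hab : a ≤ b) (f φ : ℝ → ℝ) (hc : ContinuousOn f (Icc a b))
    (hd : ∀ s ∈ Ioo a b, HasDerivAt f (φ s) s) (hφ : ∀ s ∈ Ioo a b, 0 ≤ φ s) :
    f a ≤ f b := by
  have hmono : MonotoneOn f (Icc a b) := by
    apply monotoneOn_of_deriv_nonneg (convex_Icc a b) hc
    · intro x hx
      rw [interior_Icc] at hx
      exact (hd x hx).differentiableAt.differentiableWithinAt
    · intro x hx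
      rw [interior_Icc] at hx
      rw [(hd x hx).deriv]
      exact hφ x hx
  exact hmono (left_mem_Icc.2 hab) (right_mem_Icc.2 hab) hab

lemma gronwall_lower (L a t₁ : ℝ) (hat : a ≤ t₁) (f φ : ℝ → ℝ)
    (hc : ContinuousOn f (Icc a t₁)) (hd : ∀ s ∈ Ioo a t₁, HasDerivAt f (φ s) s)
    (hφ : ∀ s ∈ Ioo a t₁, -L * f s ≤ φ s) :
    f a * Real.exp (-L * (t₁ - a)) ≤ f t₁ := by
  have hg : f a * Real.exp (L * a) ≤ f t₁ * Real.exp (L * t₁) := by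
    apply scalar_mono a t₁ hat (fun s => f s * Real.exp (L * s))
      (fun s => φ s * Real.exp (L * s) + f s * (L * Real.exp (L * s)))
    · exact hc.mul (Real.continuous_exp.comp (continuous_const.mul continuous_id)).continuousOn
    · intro s hs
      have he : HasDerivAt (fun s => Real.exp (L * s)) (L * Real.exp (L * s)) s := by
        have := (Real.hasDerivAt_exp (L * s)).comp s ((hasDerivAt_id s).const_mul L)
        simpa [mul_comm, Function.comp_def] using this
      exact (hd s hs).mul he
    · intro s hs
      have h1 := hφ s hs
      have h2 : (0:ℝ) < Real.exp (L * s) := Real.exp_pos _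
      nlinarith
  have h3 : (0:ℝ) < Real.exp (L * t₁) := Real.exp_pos _
  have key : f a * Real.exp (-L * (t₁ - a)) * Real.exp (L * t₁) = f a * Real.exp (L * a) := by
    rw [mul_assoc, ← Real.exp_add]
    ring_nf
  calc f a * Real.exp (-L * (t₁ - a)) = f a * Real.exp (-L*(t₁-a)) * Real.exp (L*t₁) / Real.exp (L*t₁) := by
        field_simp
  _ = f a * Real.exp (L * a) / Real.exp (L * t₁) := by rw [key]
  _ ≤ f t₁ * Real.exp (L * t₁) / Real.exp (L * t₁) := by
        exact (div_le_div_iff_of_pos_right h3).2 hg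
  _ = f t₁ := by field_simp

lemma integ_ker {n : ℕ} (Ω : Set (Pt n)) (hOb : Bornology.IsBounded Ω) (k : Pt n → Pt n → ℝ)
    (hkc : Continuous (Function.uncurry k)) (f : Pt n → ℝ) (hf : ContinuousOn f (closure Ω))
    (x : Pt n) : IntegrableOn (fun y => k x y * f y) Ω volume := by
  have hkx : Continuous (fun y => k x y) := hkc.comp (Continuous.prodMk_right x)
  exact ((hkx.continuousOn.mul hf).integrableOn_compact hOb.isCompact_closure).mono_set
    subset_closure

lemma cont_int_ker {n : ℕ} (Ω : Set (Pt n)) (hO : IsOpen Ω) (hOb : Bornology.IsBounded Ω)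
    (k : Pt n → Pt n → ℝ) (hkc : Continuous (Function.uncurry k))
    (ψ : Pt n → ℝ) (hψm : AEStronglyMeasurable ψ (volume.restrict Ω))
    (C : ℝ) (hψb : ∀ y ∈ Ω, |ψ y| ≤ C) :
    Continuous (fun x => ∫ y in Ω, k x y * ψ y) := by
  have hfinM : IsFiniteMeasure (volume.restrict Ω) := by
    constructor
    rw [Measure.restrict_apply_univ]
    exact lt_of_le_of_lt (measure_mono subset_closure) hOb.isCompact_closure.measure_lt_top
  rw [continuous_iff_continuousAt]
  intro x0
  have hKc : IsCompact ((Metric.closedBall x0 1) ×ˢ (closure Ω)) :=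
    (isCompact_closedBall x0 1).prod hOb.isCompact_closure
  obtain ⟨Ck, hCk⟩ : ∃ Ck, ∀ q ∈ ((Metric.closedBall x0 1) ×ˢ (closure Ω)),
      |Function.uncurry k q| ≤ Ck := by
    rcases ((Metric.closedBall x0 1) ×ˢ (closure Ω)).eq_empty_or_nonempty with he | hne
    · exact ⟨0, by rw [he]; simp⟩
    · obtain ⟨q0, hq0, hmax⟩ := hKc.exists_isMaxOn hne (continuous_abs.comp hkc).continuousOn
      exact ⟨|Function.uncurry k q0|, fun q hq => hmax hq⟩
  have hmeas : ∀ x : Pt n, AEStronglyMeasurable (fun y => k x y * ψ y) (volume.restrict Ω) :=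
    fun x => ((hkc.comp (continuous_const.prodMk continuous_id)).aestronglyMeasurable).mul hψm
  apply continuousAt_of_dominated (bound := fun _ => |Ck| * |C|)
  · exact Filter.Eventually.of_forall hmeas
  · filter_upwards [Metric.closedBall_mem_nhds x0 zero_lt_one] with x hx
    rw [ae_restrict_iff' hO.measurableSet]
    filter_upwards with y hy
    have h1 : |k x y| ≤ |Ck| :=
      le_trans (hCk (x, y) ⟨hx, subset_closure hy⟩) (le_abs_self Ck)
    have h2 : |ψ y| ≤ |C| := le_trans (hψb y hy) (le_abs_self C)
    calc ‖k x y * ψ y‖ = |k x y| * |ψ y| := by rw [Real.norm_eq_abs, abs_mul]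
    _ ≤ |Ck| * |C| := mul_le_mul h1 h2 (abs_nonneg _) (abs_nonneg _)
  · exact integrable_const _
  · rw [ae_restrict_iff' hO.measurableSet]
    filter_upwards with y hy
    exact ((hkc.comp (continuous_id.prodMk continuous_const)).continuousAt).mul continuousAt_const

noncomputable def iterK {n : ℕ} (Ω : Set (Pt n)) (k : Pt n → Pt n → ℝ) :
    ℕ → (Pt n → ℝ) → Pt n → ℝ
  | 0, φ => φ
  | (N+1), φ => fun x => ∫ y in Ω, k x y * iterK Ω k N φ y

/-- regularity of iterates -/

lemma iter_reg {n : ℕ} (Ω : Set (Pt n)) (hO : IsOpen Ω) (hOb : Bornology.IsBounded Ω)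
    (k : Pt n → Pt n → ℝ) (hkc : Continuous (Function.uncurry k)) (hk0 : ∀ x y, 0 ≤ k x y)
    (φ : Pt n → ℝ) (hφc : ContinuousOn φ (closure Ω)) (hφ0 : ∀ y ∈ closure Ω, 0 ≤ φ y) :
    ∀ i, 1 ≤ i → Continuous (iterK Ω k i φ) ∧ ∀ y, 0 ≤ iterK Ω k i φ y := by
  have hbnd : ∀ ψ : Pt n → ℝ, ContinuousOn ψ (closure Ω) → ∃ C, ∀ y ∈ Ω, |ψ y| ≤ C := by
    intro ψ hψ
    rcases (closure Ω).eq_empty_or_nonempty with he | hne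
    · exact ⟨0, fun y hy => absurd (subset_closure hy) (by rw [he]; simp)⟩
    · obtain ⟨q0, hq0, hmax⟩ := hOb.isCompact_closure.exists_isMaxOn hne
        (continuous_abs.comp_continuousOn hψ)
      exact ⟨|ψ q0|, fun y hy => hmax (subset_closure hy)⟩
  intro i hi
  induction i with
  | zero => omega
  | succ j ih =>
    rcases Nat.eq_or_lt_of_le hi with h1 | h1
    · -- j = 0 : base case
      have hj : j = 0 := by omega
      subst hj
      constructor
      · obtain ⟨C, hC⟩ := hbnd φ hφc
        exact cont_int_ker Ω hO hOb k hkc φ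
          ((hφc.mono subset_closure).aestronglyMeasurable hO.measurableSet) C hC
      · intro y
        show 0 ≤ ∫ w in Ω, k y w * iterK Ω k 0 φ w
        apply setIntegral_nonneg hO.measurableSet
        intro w hw
        exact mul_nonneg (hk0 y w) (hφ0 w (subset_closure hw))
  
    · -- j ≥ 1
      have hj : 1 ≤ j := by omega
      obtain ⟨hcont, hnn⟩ := ih hj
      constructor
      · obtain ⟨C, hC⟩ := hbnd _ hcont.continuousOn
        exact cont_int_ker Ω hO hOb k hkc _ hcont.aestronglyMeasurable.restrict C hC
      · intro y
        show 0 ≤ ∫ w in Ω, k y w * iterK Ω k j φ w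
        apply setIntegral_nonneg hO.measurableSet
        intro w hw
        exact mul_nonneg (hk0 y w) (hnn w)

lemma preconn_subset {n : ℕ} (Ω U V : Set (Pt n)) (hO : IsPreconnected Ω)
    (hU : IsOpen U) (hV : IsOpen V) (hcov : Ω ⊆ U ∪ V)
    (hdisj : Ω ∩ (U ∩ V) = ∅) (hUne : (Ω ∩ U).Nonempty) : Ω ⊆ U := by
  by_contra hcon
  have hVne : (Ω ∩ V).Nonempty := by
    rw [Set.not_subset] at hcon
    obtain ⟨x, hx1, hx2⟩ := hcon
    exact ⟨x, hx1, (hcov hx1).resolve_left hx2⟩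
  obtain ⟨x, hx⟩ := hO U V hU hV hcov hUne hVne
  rw [hdisj] at hx
  exact hx

lemma chain {n : ℕ} (Ω : Set (Pt n)) (hO : IsOpen Ω) (hOconn : IsConnected Ω)
    (hOb : Bornology.IsBounded Ω)
    (k : Pt n → Pt n → ℝ) (hkc : Continuous (Function.uncurry k)) (hk0 : ∀ x y, 0 ≤ k x y)
    (ρ k₀ : ℝ) (hρ : 0 < ρ) (hk₀ : 0 < k₀)
    (hker : ∀ x ∈ closure Ω, ∀ y ∈ closure Ω, dist x y ≤ 4*ρ → k₀ ≤ k x y)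
    (z : Pt n) (hz : z ∈ closure Ω) :
    ∃ N : ℕ, 1 ≤ N ∧ ∃ η > 0, ∀ φ : Pt n → ℝ, ContinuousOn φ (closure Ω) →
      (∀ y ∈ closure Ω, 0 ≤ φ y) → ∀ x ∈ closure Ω,
      η * ∫ y in Metric.ball z ρ ∩ Ω, φ y ≤ iterK Ω k N φ x := by
  classical
  have hK : IsCompact (closure Ω) := hOb.isCompact_closure
  -- the chain of sets
  set S : ℕ → Set (Pt n) := fun i => Nat.rec (Metric.ball z ρ)
    (fun _ Si => {x | ∃ y ∈ Si ∩ Ω, dist x y < ρ}) i with hSdef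
  have hS0 : S 0 = Metric.ball z ρ := rfl
  have hSs : ∀ i, S (i+1) = {x | ∃ y ∈ S i ∩ Ω, dist x y < ρ} := fun _ => rfl
  have hSmem : ∀ i (x : Pt n), x ∈ S (i+1) ↔ ∃ y ∈ S i ∩ Ω, dist x y < ρ := fun _ _ => Iff.rfl
  have hSopen : ∀ i, IsOpen (S i) := by
    intro i
    induction i with
    | zero => exact Metric.isOpen_ball
    | succ j _ =>
      have h : S (j+1) = ⋃ y ∈ S j ∩ Ω, Metric.ball y ρ := by
        rw [hSs]
        ext x
        simp only [Set.mem_setOf_eq, Set.mem_iUnion, Metric.mem_ball]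
        constructor
        · rintro ⟨y, hy, hd⟩; exact ⟨y, hy, hd⟩
        · rintro ⟨y, hy, hd⟩; exact ⟨y, hy, hd⟩
      rw [h]
      exact isOpen_biUnion (fun y _ => Metric.isOpen_ball)
  have hSmono1 : ∀ i, S i ∩ Ω ⊆ S (i+1) := by
    intro i x hx
    exact (hSmem i x).2 ⟨x, hx, by simp [hρ]⟩
  have hSmono : ∀ i, S (i+1) ⊆ S (i+2) := by
    intro i x hx
    obtain ⟨y, hy, hd⟩ := (hSmem i x).1 hx
    exact (hSmem (i+1) x).2 ⟨y, ⟨hSmono1 i hy, hy.2⟩, hd⟩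
  -- covering: Ω ⊆ ⋃ S i via connectedness
  set U : Set (Pt n) := ⋃ i, S i with hU
  have hUo : IsOpen U := isOpen_iUnion hSopen
  have hΩU : Ω ⊆ U := by
    apply preconn_subset Ω U (closure (Ω ∩ U))ᶜ hOconn.2 hUo (isClosed_closure.isOpen_compl)
    · intro x hxΩ
      by_cases hx : x ∈ closure (Ω ∩ U)
      · left
        obtain ⟨y, ⟨hyΩ, hyU⟩, hdist⟩ := Metric.mem_closure_iff.1 hx ρ hρ
        obtain ⟨i, hyS⟩ := Set.mem_iUnion.1 hyU
        exact Set.mem_iUnion.2 ⟨i+1, (hSmem i x).2 ⟨y, ⟨hyS, hyΩ⟩, hdist⟩⟩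
      · exact Or.inr hx
    · rw [Set.eq_empty_iff_forall_notMem]
      rintro x ⟨hxΩ, hxU, hxV⟩
      exact hxV (subset_closure ⟨hxΩ, hxU⟩)
    · obtain ⟨w, hwΩ, hdzw⟩ := Metric.mem_closure_iff.1 hz ρ hρ
      refine ⟨w, hwΩ, Set.mem_iUnion.2 ⟨0, ?_⟩⟩
      rw [hS0]
      rw [Metric.mem_ball, dist_comm]
      exact hdzw
  have hcov : closure Ω ⊆ ⋃ i, S (i+1) := by
    intro x hx
    obtain ⟨w, hwΩ, hdxw⟩ := Metric.mem_closure_iff.1 hx ρ hρ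
    obtain ⟨i, hwS⟩ := Set.mem_iUnion.1 (hΩU hwΩ)
    exact Set.mem_iUnion.2 ⟨i, (hSmem i x).2 ⟨w, ⟨hwS, hwΩ⟩, hdxw⟩⟩
  -- finite subcover
  obtain ⟨N', hN'⟩ : ∃ N', closure Ω ⊆ S (N'+1) := by
    obtain ⟨t, ht⟩ := hK.elim_finite_subcover (fun i => S (i+1)) (fun i => hSopen (i+1)) hcov
    by_cases hte : t.Nonempty
    · obtain ⟨N, hN⟩ := t.exists_le
      refine ⟨N, ht.trans (Set.iUnion₂_subset fun i hi => ?_)⟩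
      have hmono : Monotone (fun i => S (i+1)) := monotone_nat_of_le_succ hSmono
      exact hmono (hN i hi)
    · rw [Finset.not_nonempty_iff_eq_empty] at hte
      subst hte
      simp at ht
      exact ⟨0, by rw [ht]; simp⟩
  -- fixed finite cover of the closure by ρ/2-balls
  obtain ⟨W, hWmem, hWcov⟩ := hK.elim_nhds_subcover (fun w => Metric.ball w (ρ/2))
    (fun w _ => Metric.ball_mem_nhds w (by positivity))
  -- main induction
  have claim : ∀ i : ℕ, ∃ η > 0, ∀ φ : Pt n → ℝ, ContinuousOn φ (closure Ω) →
      (∀ y ∈ closure Ω, 0 ≤ φ y) → ∀ x ∈ S (i+1) ∩ closure Ω,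
      η * ∫ y in Metric.ball z ρ ∩ Ω, φ y ≤ iterK Ω k (i+1) φ x := by
    intro i
    induction i with
    | zero =>
      refine ⟨k₀, hk₀, fun φ hφc hφ0 x hx => ?_⟩
      obtain ⟨hxS, hxK⟩ := hx
      have hφint : IntegrableOn φ Ω volume :=
        (hφc.integrableOn_compact hK).mono_set subset_closure
      have hkerint : IntegrableOn (fun y => k x y * φ y) Ω volume :=
        integ_ker Ω hOb k hkc φ hφc x
      have hmeasB : MeasurableSet (Metric.ball z ρ ∩ Ω) :=
        (Metric.isOpen_ball.inter hO).measurableSet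
      have hdists : ∀ y ∈ Metric.ball z ρ ∩ Ω, dist x y ≤ 4*ρ := by
        rintro y ⟨hyB, hyΩ⟩
        obtain ⟨y', ⟨hy'B, hy'Ω⟩, hdxy'⟩ := (hSmem 0 x).1 hxS
        rw [hS0, Metric.mem_ball] at hy'B
        rw [Metric.mem_ball] at hyB
        calc dist x y ≤ dist x y' + dist y' y := dist_triangle _ _ _
        _ ≤ dist x y' + (dist y' z + dist z y) := by linarith [dist_triangle y' z y]
        _ ≤ 4*ρ := by
            rw [dist_comm z y]
            linarith
      show k₀ * ∫ y in Metric.ball z ρ ∩ Ω, φ y ≤ ∫ y in Ω, k x y * φ y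
      calc k₀ * ∫ y in Metric.ball z ρ ∩ Ω, φ y
          = ∫ y in Metric.ball z ρ ∩ Ω, k₀ * φ y := (integral_const_mul _ _).symm
      _ ≤ ∫ y in Metric.ball z ρ ∩ Ω, k x y * φ y := by
          have hc1 : IntegrableOn (fun y => k₀ * φ y) Ω volume := hφint.const_mul k₀
          apply setIntegral_mono_on (hc1.mono_set Set.inter_subset_right)
            (hkerint.mono_set Set.inter_subset_right) hmeasB
          intro y hy
          apply mul_le_mul_of_nonneg_right (hker x hxK y (subset_closure hy.2) (hdists y hy))
            (hφ0 y (subset_closure hy.2))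
      _ ≤ ∫ y in Ω, k x y * φ y := by
          apply setIntegral_mono_set hkerint
          · rw [EventuallyLE, ae_restrict_iff' hO.measurableSet]
            filter_upwards with y hy
            exact mul_nonneg (hk0 x y) (hφ0 y (subset_closure hy))
          · exact HasSubset.Subset.eventuallyLE Set.inter_subset_right
    | succ j IH =>
      obtain ⟨η, hη, IH⟩ := IH
      set G : Set (Pt n) := S (j+1) ∩ Ω with hG
      have hGo : IsOpen G := (hSopen (j+1)).inter hO
      set J : Finset (Pt n) := W.filter (fun w => 0 < volume (Metric.ball w (3*ρ/2) ∩ G)) with hJ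
      have hWx : ∀ x ∈ S (j+2) ∩ closure Ω, ∃ w ∈ W, dist x w < ρ/2 ∧
          0 < volume (Metric.ball w (3*ρ/2) ∩ G) := by
        rintro x ⟨hxS, hxK⟩
        obtain ⟨y, hyG, hdxy⟩ := (hSmem (j+1) x).1 hxS
        obtain ⟨w, hwW, hxw⟩ := Set.mem_iUnion₂.1 (hWcov hxK)
        rw [Metric.mem_ball] at hxw
        refine ⟨w, hwW, hxw, ?_⟩
        apply (Metric.isOpen_ball.inter hGo).measure_pos volume
        refine ⟨y, ?_, hyG⟩
        rw [Metric.mem_ball]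
        calc dist y w ≤ dist y x + dist x w := dist_triangle _ _ _
        _ < ρ + ρ/2 := by rw [dist_comm y x]; exact add_lt_add hdxy hxw
        _ = 3*ρ/2 := by ring
      by_cases hJne : J.Nonempty
      · set ω : ℝ := J.inf' hJne (fun w => (volume (Metric.ball w (3*ρ/2) ∩ G)).toReal) with hω
        have hωpos : 0 < ω := by
          rw [hω, Finset.lt_inf'_iff]
          intro w hw
          rw [hJ, Finset.mem_filter] at hw
          apply ENNReal.toReal_pos (ne_of_gt hw.2)
          exact ne_of_lt (lt_of_le_of_lt (measure_mono Set.inter_subset_left)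
            measure_ball_lt_top)
        refine ⟨k₀ * η * ω, by positivity, fun φ hφc hφ0 x hx => ?_⟩
        obtain ⟨hxS, hxK⟩ := hx
        obtain ⟨w, hwW, hxw, hvolpos⟩ := hWx x ⟨hxS, hxK⟩
        have hwJ : w ∈ J := by rw [hJ, Finset.mem_filter]; exact ⟨hwW, hvolpos⟩
        have hωw : ω ≤ (volume (Metric.ball w (3*ρ/2) ∩ G)).toReal :=
          Finset.inf'_le _ hwJ
        obtain ⟨hψcont, hψnn⟩ := iter_reg Ω hO hOb k hkc hk0 φ hφc hφ0 (j+1) (by omega)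
        set ψ : Pt n → ℝ := iterK Ω k (j+1) φ with hψ
        set A : Set (Pt n) := Metric.ball w (3*ρ/2) ∩ G with hA
        have hAΩ : A ⊆ Ω := fun q hq => hq.2.2
        have hAmeas : MeasurableSet A := (Metric.isOpen_ball.inter hGo).measurableSet
        have hIφ : 0 ≤ ∫ y in Metric.ball z ρ ∩ Ω, φ y := by
          apply setIntegral_nonneg (Metric.isOpen_ball.inter hO).measurableSet
          intro y hy
          exact hφ0 y (subset_closure hy.2)
        have hIker : IntegrableOn (fun q => k x q * ψ q) Ω volume :=
          integ_ker Ω hOb k hkc ψ hψcont.continuousOn x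
        have hptwise : ∀ q ∈ A, k₀ * (η * ∫ y in Metric.ball z ρ ∩ Ω, φ y) ≤ k x q * ψ q := by
          rintro q ⟨hqB, hqG⟩
          have hqΩ : q ∈ Ω := hqG.2
          have hdxq : dist x q ≤ 4*ρ := by
            rw [Metric.mem_ball] at hqB
            calc dist x q ≤ dist x w + dist w q := dist_triangle _ _ _
            _ ≤ ρ/2 + 3*ρ/2 := by rw [dist_comm w q]; linarith
            _ ≤ 4*ρ := by linarith
          have h1 : k₀ ≤ k x q := hker x hxK q (subset_closure hqΩ) hdxq
          have h2 : η * ∫ y in Metric.ball z ρ ∩ Ω, φ y ≤ ψ q :=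
            IH φ hφc hφ0 q ⟨hqG.1, subset_closure hqΩ⟩
          exact mul_le_mul h1 h2 (mul_nonneg hη.le hIφ) (le_trans hk₀.le h1)
        show k₀ * η * ω * ∫ y in Metric.ball z ρ ∩ Ω, φ y ≤ ∫ q in Ω, k x q * ψ q
        calc k₀ * η * ω * ∫ y in Metric.ball z ρ ∩ Ω, φ y
            ≤ k₀ * η * (volume A).toReal * ∫ y in Metric.ball z ρ ∩ Ω, φ y := by
              apply mul_le_mul_of_nonneg_right _ hIφ
              nlinarith [mul_pos hk₀ hη, hωw]
        _ = (volume A).toReal * (k₀ * (η * ∫ y in Metric.ball z ρ ∩ Ω, φ y)) := by ring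
        _ = ∫ _ in A, (k₀ * (η * ∫ y in Metric.ball z ρ ∩ Ω, φ y)) := by
              rw [setIntegral_const]
              simp [smul_eq_mul, measureReal_def]
        _ ≤ ∫ q in A, k x q * ψ q := by
              apply setIntegral_mono_on (integrableOn_const ?_)
                (hIker.mono_set hAΩ) hAmeas hptwise
              exact ne_of_lt <| lt_of_le_of_lt (measure_mono hAΩ)
                (lt_of_le_of_lt (measure_mono subset_closure) hK.measure_lt_top)
        _ ≤ ∫ q in Ω, k x q * ψ q := by
              apply setIntegral_mono_set hIker
              · rw [EventuallyLE, ae_restrict_iff' hO.measurableSet]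
                filter_upwards with q hq
                exact mul_nonneg (hk0 x q) (hψnn q)
              · exact HasSubset.Subset.eventuallyLE hAΩ
      · refine ⟨1, one_pos, fun φ hφc hφ0 x hx => ?_⟩
        exfalso
        obtain ⟨w, hwW, _, hvolpos⟩ := hWx x hx
        exact hJne ⟨w, by rw [hJ, Finset.mem_filter]; exact ⟨hwW, hvolpos⟩⟩
  -- conclude
  obtain ⟨η, hη, hclaim⟩ := claim N'
  exact ⟨N'+1, by omega, η, hη, fun φ hφc hφ0 x hx => hclaim φ hφc hφ0 x ⟨hN' hx, hx⟩⟩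

lemma kerpos {n : ℕ} (Ω : Set (Pt n)) (hOb : Bornology.IsBounded Ω) (hne : (closure Ω).Nonempty)
    (k : Pt n → Pt n → ℝ) (hkc : Continuous (Function.uncurry k)) (hkd : ∀ x, 0 < k x x) :
    ∃ ρ > 0, ∃ k₀ > 0, ∀ x ∈ closure Ω, ∀ y ∈ closure Ω, dist x y ≤ 4*ρ → k₀ ≤ k x y := by
  have hK : IsCompact (closure Ω) := hOb.isCompact_closure
  -- min of the diagonal
  have hdiagc : ContinuousOn (fun x : Pt n => k x x) (closure Ω) :=
    (hkc.comp (continuous_id.prodMk continuous_id)).continuousOn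
  obtain ⟨z0, hz0, hmin⟩ := hK.exists_isMinOn hne hdiagc
  set c0 : ℝ := k z0 z0 / 2 with hc0
  have hc0pos : 0 < c0 := by
    have := hkd z0
    positivity
  have hdiag : ∀ x ∈ closure Ω, 2 * c0 ≤ k x x := by
    intro x hx
    have h := hmin hx
    simp only [Set.mem_setOf_eq] at h
    simp only [hc0]
    linarith [h]
  -- uniform continuity
  have hKK : IsCompact ((closure Ω) ×ˢ (closure Ω)) := hK.prod hK
  have huc : UniformContinuousOn (Function.uncurry k) ((closure Ω) ×ˢ (closure Ω)) :=
    hKK.uniformContinuousOn_of_continuous hkc.continuousOn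
  rw [Metric.uniformContinuousOn_iff] at huc
  obtain ⟨δ, hδ, hmod⟩ := huc c0 hc0pos
  refine ⟨δ/5, by positivity, c0, hc0pos, fun x hx y hy hdist => ?_⟩
  have h1 : dist (x, y) (y, y) < δ := by
    rw [Prod.dist_eq]
    simp only [max_lt_iff]
    constructor
    · linarith [hdist]
    · simp [hδ]
  have h2 := hmod (x, y) ⟨hx, hy⟩ (y, y) ⟨hy, hy⟩ h1
  simp only [Function.uncurry, Real.dist_eq] at h2
  have h3 := abs_lt.1 h2
  have h4 := hdiag y hy
  linarith [h3.1]

lemma pos {n : ℕ} (Ω : Set (Pt n)) (hO : IsOpen Ω) (hOb : Bornology.IsBounded Ω)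
    (k : Pt n → Pt n → ℝ) (hkc : Continuous (Function.uncurry k)) (hk0 : ∀ x y, 0 ≤ k x y)
    (u : Pt n → ℝ → ℝ)
    (huc : ContinuousOn (fun q : Pt n × ℝ => u q.1 q.2) (closure Ω ×ˢ Set.Ici 0))
    (hu0 : ∀ x ∈ closure Ω, 0 < u x 0)
    (d : ℝ) (hd : 0 < d) (σ : Pt n → ℝ → ℝ) (L : ℝ)
    (hσ : ∀ x ∈ closure Ω, ∀ t ≥ (0:ℝ), |σ x t| ≤ L)
    (hder : ∀ x ∈ closure Ω, ∀ t > (0:ℝ),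
      HasDerivAt (u x) (d * (∫ y in Ω, k x y * u y t) + u x t * σ x t) t) :
    ∀ x ∈ closure Ω, ∀ a t : ℝ, 0 ≤ a → a ≤ t →
      u x a * Real.exp (-L * (t - a)) ≤ u x t := by
  have hK : IsCompact (closure Ω) := hOb.isCompact_closure
  -- slice continuity in t
  have ht_slice : ∀ x ∈ closure Ω, ContinuousOn (u x) (Set.Ici 0) := by
    intro x hx
    have hmap : ContinuousOn (fun t : ℝ => (x, t)) (Set.Ici 0) :=
      (continuous_const.prodMk continuous_id).continuousOn
    exact huc.comp hmap (fun t ht => ⟨hx, ht⟩)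
  have hx_slice : ∀ t : ℝ, 0 ≤ t → ContinuousOn (fun y => u y t) (closure Ω) := by
    intro t ht
    have hmap : ContinuousOn (fun x : Pt n => (x, t)) (closure Ω) :=
      (continuous_id.prodMk continuous_const).continuousOn
    exact huc.comp hmap (fun y hy => ⟨hy, ht⟩)
  -- Grönwall on an interval where u is globally nonnegative
  have grgood : ∀ a t₁ : ℝ, 0 ≤ a → a ≤ t₁ →
      (∀ s, a ≤ s → s ≤ t₁ → ∀ y ∈ closure Ω, 0 ≤ u y s) →
      ∀ x ∈ closure Ω, u x a * Real.exp (-L * (t₁ - a)) ≤ u x t₁ := by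
    intro a t₁ ha hat hgood x hx
    apply gronwall_lower L a t₁ hat (u x)
      (fun s => d * (∫ y in Ω, k x y * u y s) + u x s * σ x s)
    · exact (ht_slice x hx).mono (fun s hs => le_trans ha hs.1)
    · intro s hs
      exact hder x hx s (lt_of_le_of_lt ha hs.1)
    · intro s hs
      have hs0 : (0:ℝ) ≤ s := le_trans ha hs.1.le
      have hI : 0 ≤ ∫ y in Ω, k x y * u y s := by
        apply setIntegral_nonneg hO.measurableSet
        intro y hy
        exact mul_nonneg (hk0 x y) (hgood s hs.1.le hs.2.le y (subset_closure hy))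
      have hu_nn : 0 ≤ u x s := hgood s hs.1.le hs.2.le x hx
      have hσs := abs_le.1 (hσ x hx s hs0)
      nlinarith [hσs.1, hσs.2]
  -- global nonnegativity
  have hnn : ∀ t : ℝ, 0 ≤ t → ∀ y ∈ closure Ω, 0 ≤ u y t := by
    by_contra hcon
    push_neg at hcon
    obtain ⟨t0, ht0, y0, hy0, hlt⟩ := hcon
    set Bad := {t : ℝ | 0 ≤ t ∧ ∃ x ∈ closure Ω, u x t < 0} with hBad
    have hne : Bad.Nonempty := ⟨t0, ht0, y0, hy0, hlt⟩
    have hbdd : BddBelow Bad := ⟨0, fun t ht => ht.1⟩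
    set ts := sInf Bad with hts
    have h0 : 0 ≤ ts := le_csInf hne (fun t ht => ht.1)
    have hgood : ∀ s, 0 ≤ s → s < ts → ∀ y ∈ closure Ω, 0 ≤ u y s := by
      intro s hs1 hs2 y hy
      by_contra hneg
      push_neg at hneg
      exact absurd (csInf_le hbdd ⟨hs1, y, hy, hneg⟩) (not_le.2 hs2)
    have hstar : ∀ y ∈ closure Ω, 0 ≤ u y ts := by
      intro y hy
      rcases eq_or_lt_of_le h0 with h | h
      · rw [← h]; exact (hu0 y hy).le
      · have hcw : ContinuousWithinAt (u y) (Set.Ico 0 ts) ts :=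
          ((ht_slice y hy) ts h0).mono Set.Ico_subset_Ici_self
        have hnb : (𝓝[Set.Ico 0 ts] ts).NeBot := by
          rw [← mem_closure_iff_nhdsWithin_neBot, closure_Ico (ne_of_lt h)]
          exact ⟨h0, le_rfl⟩
        apply ge_of_tendsto hcw.tendsto
        filter_upwards [self_mem_nhdsWithin] with s hs
        exact hgood s hs.1 hs.2 y hy
    have hposstar : ∀ y ∈ closure Ω, 0 < u y ts := by
      intro y hy
      have := grgood 0 ts le_rfl h0 (fun s hs1 hs2 z hz => by
        rcases lt_or_eq_of_le hs2 with h | h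
        · exact hgood s hs1 h z hz
        · rw [h]; exact hstar z hz) y hy
      have h2 : 0 < u y 0 * Real.exp (-L * (ts - 0)) :=
        mul_pos (hu0 y hy) (Real.exp_pos _)
      linarith
    -- approximating sequence from the infimum
    have hseq : ∀ i : ℕ, ∃ t, t ∈ Bad ∧ t < ts + 1/(i+1) := by
      intro i
      obtain ⟨t, ht1, ht2⟩ := Real.lt_sInf_add_pos hne (show (0:ℝ) < 1/(i+1) by positivity)
      exact ⟨t, ht1, ht2⟩
    choose tseq htseq1 htseq2 using hseq
    have htseq3 : ∀ i, ts ≤ tseq i := fun i => csInf_le hbdd (htseq1 i)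
    have htconv : Tendsto tseq atTop (𝓝 ts) := by
      apply tendsto_of_tendsto_of_tendsto_of_le_of_le tendsto_const_nhds ?_ htseq3
        (fun i => (htseq2 i).le)
      have : Tendsto (fun i : ℕ => ts + 1/(i+1 : ℝ)) atTop (𝓝 (ts + 0)) :=
        tendsto_const_nhds.add tendsto_one_div_add_atTop_nhds_zero_nat
      simpa using this
    choose xs hxs1 hxs2 using fun i => (htseq1 i).2
    obtain ⟨xb, hxb, φi, hφmono, hconv⟩ := hK.tendsto_subseq hxs1
    have hpair : Tendsto (fun i => (xs (φi i), tseq (φi i))) atTop (𝓝[closure Ω ×ˢ Set.Ici 0] (xb, ts)) := by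
      rw [tendsto_nhdsWithin_iff]
      constructor
      · exact hconv.prodMk_nhds (htconv.comp hφmono.tendsto_atTop)
      · exact Eventually.of_forall (fun i => ⟨hxs1 (φi i), (htseq1 (φi i)).1⟩)
    have hlim : Tendsto (fun i => u (xs (φi i)) (tseq (φi i))) atTop (𝓝 (u xb ts)) :=
      (huc.continuousWithinAt (show (xb, ts) ∈ closure Ω ×ˢ Set.Ici 0 from ⟨hxb, h0⟩)).tendsto.comp hpair
    have hle : u xb ts ≤ 0 := le_of_tendsto hlim (Eventually.of_forall fun i => (hxs2 (φi i)).le)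
    exact absurd hle (not_le.2 (hposstar xb hxb))
  -- conclusion
  intro x hx a t ha hat
  exact grgood a t ha hat (fun s hs1 hs2 y hy => hnn s (le_trans ha hs1) y hy) x hx

lemma duh {n : ℕ} (Ω : Set (Pt n)) (hO : IsOpen Ω) (hOb : Bornology.IsBounded Ω)
    (k : Pt n → Pt n → ℝ) (hkc : Continuous (Function.uncurry k)) (hk0 : ∀ x y, 0 ≤ k x y)
    (u : Pt n → ℝ → ℝ)
    (huc : ContinuousOn (fun q : Pt n × ℝ => u q.1 q.2) (closure Ω ×ˢ Set.Ici 0))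
    (d : ℝ) (hd : 0 < d) (σ : Pt n → ℝ → ℝ) (L : ℝ) (hL0 : 0 ≤ L)
    (hσ : ∀ x ∈ closure Ω, ∀ t ≥ (0:ℝ), |σ x t| ≤ L)
    (hder : ∀ x ∈ closure Ω, ∀ t > (0:ℝ),
      HasDerivAt (u x) (d * (∫ y in Ω, k x y * u y t) + u x t * σ x t) t)
    (hnn : ∀ t ≥ (0:ℝ), ∀ x ∈ closure Ω, 0 ≤ u x t)
    (hexp : ∀ x ∈ closure Ω, ∀ a t : ℝ, 0 ≤ a → a ≤ t →
      u x a * Real.exp (-L * (t - a)) ≤ u x t)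
    (τ : ℝ) (hτ : 0 ≤ τ) (x : Pt n) (hx : x ∈ closure Ω) :
    d * Real.exp (-(2*L)) * (∫ y in Ω, k x y * u y τ) ≤ u x (τ + 1) := by
  have ht_slice : ∀ x ∈ closure Ω, ContinuousOn (u x) (Set.Ici 0) := by
    intro x hx
    have hmap : ContinuousOn (fun t : ℝ => (x, t)) (Set.Ici 0) :=
      (continuous_const.prodMk continuous_id).continuousOn
    exact huc.comp hmap (fun t ht => ⟨hx, ht⟩)
  have hx_slice : ∀ t : ℝ, 0 ≤ t → ContinuousOn (fun y => u y t) (closure Ω) := by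
    intro t ht
    have hmap : ContinuousOn (fun x : Pt n => (x, t)) (closure Ω) :=
      (continuous_id.prodMk continuous_const).continuousOn
    exact huc.comp hmap (fun y hy => ⟨hy, ht⟩)
  set J : ℝ := Real.exp (-L) * ∫ y in Ω, k x y * u y τ with hJ
  have hJnn : 0 ≤ J := by
    apply mul_nonneg (Real.exp_pos _).le
    apply setIntegral_nonneg hO.measurableSet
    intro y hy
    exact mul_nonneg (hk0 x y) (hnn τ hτ y (subset_closure hy))
  -- I(x,s) ≥ J for s in [τ, τ+1]
  have hIJ : ∀ s, τ ≤ s → s ≤ τ + 1 → J ≤ ∫ y in Ω, k x y * u y s := by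
    intro s hs1 hs2
    have hs0 : (0:ℝ) ≤ s := le_trans hτ hs1
    have heq : J = ∫ y in Ω, Real.exp (-L) * (k x y * u y τ) := by
      rw [hJ, integral_const_mul]
    rw [heq]
    apply setIntegral_mono_on
    · exact (integ_ker Ω hOb k hkc (fun y => u y τ) (hx_slice τ hτ) x).const_mul _
    · exact integ_ker Ω hOb k hkc (fun y => u y s) (hx_slice s hs0) x
    · exact hO.measurableSet
    · intro y hy
      have hy' : y ∈ closure Ω := subset_closure hy
      have h1 : u y τ * Real.exp (-L * (s - τ)) ≤ u y s := hexp y hy' τ s hτ hs1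
      have h2 : Real.exp (-L) ≤ Real.exp (-L * (s - τ)) := by
        apply Real.exp_le_exp.2
        nlinarith
      have h3 : 0 ≤ u y τ := hnn τ hτ y hy'
      have h4 : 0 ≤ k x y := hk0 x y
      have hA : Real.exp (-L) * (k x y * u y τ) ≤ Real.exp (-L*(s-τ)) * (k x y * u y τ) :=
        mul_le_mul_of_nonneg_right h2 (mul_nonneg h4 h3)
      have hB : Real.exp (-L*(s-τ)) * (k x y * u y τ) = k x y * (u y τ * Real.exp (-L*(s-τ))) := by
        ring
      have hC : k x y * (u y τ * Real.exp (-L*(s-τ))) ≤ k x y * u y s :=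
        mul_le_mul_of_nonneg_left h1 h4
      linarith
  -- monotone auxiliary function
  have hmono : u x τ * Real.exp (L * (τ - τ)) - d * J * (τ - τ) ≤
      u x (τ+1) * Real.exp (L * ((τ+1) - τ)) - d * J * ((τ+1) - τ) := by
    apply scalar_mono τ (τ+1) (by linarith)
      (fun t => u x t * Real.exp (L * (t - τ)) - d * J * (t - τ))
      (fun s => (d * (∫ y in Ω, k x y * u y s) + u x s * σ x s) * Real.exp (L * (s - τ))
        + u x s * (L * Real.exp (L * (s - τ))) - d * J)
    · apply ContinuousOn.sub
      · apply ContinuousOn.mul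
        · exact (ht_slice x hx).mono (fun s hs => le_trans hτ hs.1)
        · exact (Real.continuous_exp.comp (continuous_const.mul (continuous_id.sub continuous_const))).continuousOn
      · exact (continuous_const.mul (continuous_id.sub continuous_const)).continuousOn
    · intro s hs
      have hs0 : (0:ℝ) < s := lt_of_le_of_lt hτ hs.1
      have he : HasDerivAt (fun t => Real.exp (L * (t - τ))) (L * Real.exp (L * (s - τ))) s := by
        have h1 : HasDerivAt (fun t : ℝ => L * (t - τ)) L s := by
          simpa using ((hasDerivAt_id s).sub_const τ).const_mul L
        have := (Real.hasDerivAt_exp (L * (s - τ))).comp s h1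
        simpa [mul_comm, Function.comp_def] using this
      have hd1 : HasDerivAt (fun t => u x t * Real.exp (L * (t - τ)))
          ((d * (∫ y in Ω, k x y * u y s) + u x s * σ x s) * Real.exp (L * (s - τ))
            + u x s * (L * Real.exp (L * (s - τ)))) s :=
        (hder x hx s hs0).mul he
      have hd2 : HasDerivAt (fun t : ℝ => d * J * (t - τ)) (d * J) s := by
        simpa using ((hasDerivAt_id s).sub_const τ).const_mul (d * J)
      exact hd1.sub hd2
    · intro s hs
      have hs0 : (0:ℝ) ≤ s := le_trans hτ hs.1.le
      have hIJs := hIJ s hs.1.le hs.2.le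
      have hunn : 0 ≤ u x s := hnn s hs0 x hx
      have hσs := abs_le.1 (hσ x hx s hs0)
      have hE : (1:ℝ) ≤ Real.exp (L * (s - τ)) := by
        rw [show (1:ℝ) = Real.exp 0 by simp]
        apply Real.exp_le_exp.2
        nlinarith [hs.1.le]
      -- (d*I + u*σ)*E + u*L*E - d*J ≥ 0
      have h1 : d * J ≤ d * ∫ y in Ω, k x y * u y s := by
        apply mul_le_mul_of_nonneg_left hIJs hd.le
      have h2 : 0 ≤ u x s * σ x s + u x s * L := by nlinarith
      nlinarith [mul_le_mul_of_nonneg_right h1 (le_trans zero_le_one hE),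
        mul_nonneg (mul_nonneg hd.le hJnn) (sub_nonneg.2 hE)]
  -- conclude
  simp only [sub_self, mul_zero, Real.exp_zero, mul_one, add_sub_cancel_left] at hmono
  have hkey : d * J ≤ u x (τ+1) * Real.exp L := by
    have := hnn τ hτ x hx
    linarith
  have hfin : d * Real.exp (-(2*L)) * (∫ y in Ω, k x y * u y τ) = d * J * Real.exp (-L) := by
    rw [hJ]
    rw [show Real.exp (-(2*L)) = Real.exp (-L) * Real.exp (-L) by
      rw [← Real.exp_add]; ring_nf]
    ring
  rw [hfin]
  calc d * J * Real.exp (-L) ≤ (u x (τ+1) * Real.exp L) * Real.exp (-L) :=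
        mul_le_mul_of_nonneg_right hkey (Real.exp_pos _).le
  _ = u x (τ+1) := by rw [mul_assoc, ← Real.exp_add]; simp

lemma spread {n : ℕ} (Ω : Set (Pt n)) (hO : IsOpen Ω) (hOconn : IsConnected Ω)
    (hOb : Bornology.IsBounded Ω)
    (k : Pt n → Pt n → ℝ) (hkc : Continuous (Function.uncurry k)) (hk0 : ∀ x y, 0 ≤ k x y)
    (ρ k₀ : ℝ) (hρ : 0 < ρ) (hk₀ : 0 < k₀)
    (hker : ∀ x ∈ closure Ω, ∀ y ∈ closure Ω, dist x y ≤ 4*ρ → k₀ ≤ k x y)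
    (u : Pt n → ℝ → ℝ)
    (huc : ContinuousOn (fun q : Pt n × ℝ => u q.1 q.2) (closure Ω ×ˢ Set.Ici 0))
    (d : ℝ) (hd : 0 < d) (σ : Pt n → ℝ → ℝ) (L : ℝ) (hL0 : 0 ≤ L)
    (hσ : ∀ x ∈ closure Ω, ∀ t ≥ (0:ℝ), |σ x t| ≤ L)
    (hder : ∀ x ∈ closure Ω, ∀ t > (0:ℝ),
      HasDerivAt (u x) (d * (∫ y in Ω, k x y * u y t) + u x t * σ x t) t)
    (hnn : ∀ t ≥ (0:ℝ), ∀ x ∈ closure Ω, 0 ≤ u x t)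
    (hexp : ∀ x ∈ closure Ω, ∀ a t : ℝ, 0 ≤ a → a ≤ t →
      u x a * Real.exp (-L * (t - a)) ≤ u x t)
    (δ : ℝ) (hδ : 0 < δ) :
    ∃ N : ℕ, 1 ≤ N ∧ ∃ μ0 > 0, ∀ τ ≥ (0:ℝ), δ ≤ (∫ y in Ω, u y τ) →
      ∀ s, 0 ≤ s → s ≤ 1 → ∀ x ∈ closure Ω, μ0 ≤ u x (τ + N + s) := by
  classical
  have hK : IsCompact (closure Ω) := hOb.isCompact_closure
  have hKne : (closure Ω).Nonempty := by
    obtain ⟨w, hw⟩ := hOconn.nonempty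
    exact ⟨w, subset_closure hw⟩
  have hx_slice : ∀ t : ℝ, 0 ≤ t → ContinuousOn (fun y => u y t) (closure Ω) := by
    intro t ht
    have hmap : ContinuousOn (fun x : Pt n => (x, t)) (closure Ω) :=
      (continuous_id.prodMk continuous_const).continuousOn
    exact huc.comp hmap (fun y hy => ⟨hy, ht⟩)
  -- finite cover of closure Ω by ρ-balls
  obtain ⟨W, hWmem, hWcov⟩ := hK.elim_nhds_subcover (fun w => Metric.ball w ρ)
    (fun w _ => Metric.ball_mem_nhds w hρ)
  have hWne : W.Nonempty := by
    by_contra hcon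
    rw [Finset.not_nonempty_iff_eq_empty] at hcon
    subst hcon
    obtain ⟨x, hx⟩ := hKne
    have := hWcov hx
    simp at this
  -- chaining data for each center
  have hch := fun (z : Pt n) (hz : z ∈ W) =>
    chain Ω hO hOconn hOb k hkc hk0 ρ k₀ hρ hk₀ hker z (hWmem z hz)
  choose! Nf hNf1 ηf hηf hfprop using hch
  set N : ℕ := W.sup Nf with hN
  have hN1 : 1 ≤ N := by
    obtain ⟨z, hz⟩ := hWne
    exact le_trans (hNf1 z hz) (Finset.le_sup hz)
  set c : ℝ := d * Real.exp (-(2*L)) with hc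
  have hcpos : 0 < c := by positivity
  -- uniform constant
  set κ : ℝ := W.inf' hWne (fun z => c ^ (Nf z) * ηf z) with hκ
  have hκpos : 0 < κ := by
    rw [hκ, Finset.lt_inf'_iff]
    intro z hz
    have := hηf z hz
    positivity
  set card : ℕ := W.card with hcard
  have hcardpos : (0:ℝ) < card := by
    rw [hcard]
    exact_mod_cast Finset.card_pos.2 hWne
  refine ⟨N, hN1, Real.exp (-L * (N+1)) * κ * (δ/card), by positivity, fun τ hτ hmass s hs0 hs1 x hx => ?_⟩
  -- iterated Duhamel
  have hiterc : ∀ i : ℕ, ContinuousOn (iterK Ω k i (fun y => u y τ)) (closure Ω) := by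
    intro i
    match i with
    | 0 => exact hx_slice τ hτ
    | (j+1) =>
      exact (iter_reg Ω hO hOb k hkc hk0 _ (hx_slice τ hτ)
        (fun y hy => hnn τ hτ y hy) (j+1) (by omega)).1.continuousOn
  have hiternn : ∀ i : ℕ, ∀ y ∈ closure Ω, 0 ≤ iterK Ω k i (fun y => u y τ) y := by
    intro i
    match i with
    | 0 => exact fun y hy => hnn τ hτ y hy
    | (j+1) =>
      exact fun y _ => (iter_reg Ω hO hOb k hkc hk0 _ (hx_slice τ hτ)
        (fun y hy => hnn τ hτ y hy) (j+1) (by omega)).2 y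
  have hiter : ∀ i : ℕ, ∀ x ∈ closure Ω,
      c ^ i * iterK Ω k i (fun y => u y τ) x ≤ u x (τ + i) := by
    intro i
    induction i with
    | zero =>
      intro x hx
      simp only [pow_zero, one_mul, Nat.cast_zero, add_zero]
      exact le_refl _
    | succ j IH =>
      intro x hx
      have hτj : (0:ℝ) ≤ τ + j := by positivity
      have hstep := duh Ω hO hOb k hkc hk0 u huc d hd σ L hL0 hσ hder hnn hexp (τ + j) hτj x hx
      have hmono : c ^ j * iterK Ω k (j+1) (fun y => u y τ) x ≤ ∫ y in Ω, k x y * u y (τ + j) := by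
        have heq : c ^ j * iterK Ω k (j+1) (fun y => u y τ) x
            = ∫ y in Ω, k x y * (c ^ j * iterK Ω k j (fun y => u y τ) y) := by
          show c ^ j * (∫ y in Ω, k x y * iterK Ω k j (fun y => u y τ) y) = _
          rw [← integral_const_mul]
          congr 1
          ext y
          ring
        rw [heq]
        apply setIntegral_mono_on
        · have h1 : IntegrableOn (fun y => k x y * iterK Ω k j (fun y => u y τ) y) Ω volume :=
            integ_ker Ω hOb k hkc _ (hiterc j) x
          have h2 : IntegrableOn (fun y => c ^ j * (k x y * iterK Ω k j (fun y => u y τ) y)) Ω volume :=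
            h1.const_mul _
          apply h2.congr_fun _ hO.measurableSet
          intro y _
          ring
        · exact integ_ker Ω hOb k hkc _ (hx_slice (τ+j) hτj) x
        · exact hO.measurableSet
        · intro y hy
          have := IH y (subset_closure hy)
          have hknn := hk0 x y
          nlinarith
      calc c ^ (j+1) * iterK Ω k (j+1) (fun y => u y τ) x
          = c * (c ^ j * iterK Ω k (j+1) (fun y => u y τ) x) := by ring
      _ ≤ c * ∫ y in Ω, k x y * u y (τ + j) := by
          apply mul_le_mul_of_nonneg_left hmono hcpos.le
      _ ≤ u x ((τ + j) + 1) := hstep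
      _ = u x (τ + (j+1 : ℕ)) := by
          congr 1
          push_cast
          ring
  -- pigeonhole: one ball carries mass δ/card
  have hsplit : ∃ z ∈ W, δ/card ≤ ∫ y in Metric.ball z ρ ∩ Ω, u y τ := by
    by_contra hcon
    push_neg at hcon
    have huInt : IntegrableOn (fun y => u y τ) Ω volume :=
      ((hx_slice τ hτ).integrableOn_compact hK).mono_set subset_closure
    have hsum : (∫ y in Ω, u y τ) ≤ ∑ z ∈ W, ∫ y in Metric.ball z ρ ∩ Ω, u y τ := by
      have hind : ∀ z : Pt n, ∫ y in Metric.ball z ρ ∩ Ω, u y τ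
          = ∫ y in Ω, (Metric.ball z ρ ∩ Ω).indicator (fun y => u y τ) y := by
        intro z
        rw [integral_indicator (Metric.isOpen_ball.inter hO).measurableSet,
          Measure.restrict_restrict (Metric.isOpen_ball.inter hO).measurableSet,
          Set.inter_assoc, Set.inter_self]
      calc (∫ y in Ω, u y τ)
          ≤ ∫ y in Ω, (∑ z ∈ W, (Metric.ball z ρ ∩ Ω).indicator (fun y => u y τ) y) := by
            apply setIntegral_mono_on huInt _ hO.measurableSet
            · intro y hy
              obtain ⟨z, hzW, hzy⟩ := Set.mem_iUnion₂.1 (hWcov (subset_closure hy))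
              calc u y τ = (Metric.ball z ρ ∩ Ω).indicator (fun y => u y τ) y := by
                    rw [Set.indicator_of_mem (show y ∈ Metric.ball z ρ ∩ Ω from ⟨hzy, hy⟩)]
              _ ≤ ∑ w ∈ W, (Metric.ball w ρ ∩ Ω).indicator (fun y => u y τ) y := by
                    apply Finset.single_le_sum _ hzW
                    intro w _
                    apply Set.indicator_nonneg
                    intro y' hy'
                    exact hnn τ hτ y' (subset_closure hy'.2)
            · apply integrable_finset_sum
              intro z _
              exact huInt.indicator (Metric.isOpen_ball.inter hO).measurableSet
      _ = ∑ z ∈ W, ∫ y in Ω, (Metric.ball z ρ ∩ Ω).indicator (fun y => u y τ) y := by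
            rw [integral_finset_sum]
            intro z _
            exact huInt.indicator (Metric.isOpen_ball.inter hO).measurableSet
      _ = ∑ z ∈ W, ∫ y in Metric.ball z ρ ∩ Ω, u y τ := by
            apply Finset.sum_congr rfl
            intro z _
            rw [hind z]
    have hlt : ∑ z ∈ W, ∫ y in Metric.ball z ρ ∩ Ω, u y τ < ∑ _z ∈ W, δ/card :=
      Finset.sum_lt_sum_of_nonempty hWne (fun z hz => hcon z hz)
    rw [Finset.sum_const, hcard] at hlt
    have : (W.card : ℝ) * (δ / W.card) = δ := by
      field_simp
    rw [nsmul_eq_mul, this] at hlt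
    linarith [hmass]
  obtain ⟨z, hzW, hzmass⟩ := hsplit
  -- combine
  have hIφnn : (0:ℝ) ≤ δ/card := by positivity
  have hchainz := hfprop z hzW (fun y => u y τ) (hx_slice τ hτ) (fun y hy => hnn τ hτ y hy) x hx
  have hub1 : ηf z * (δ/card) ≤ ηf z * ∫ y in Metric.ball z ρ ∩ Ω, u y τ :=
    mul_le_mul_of_nonneg_left hzmass (hηf z hzW).le
  have hub3 : c ^ (Nf z) * (ηf z * (δ/card)) ≤ u x (τ + Nf z) := by
    calc c ^ (Nf z) * (ηf z * (δ/card))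
        ≤ c ^ (Nf z) * iterK Ω k (Nf z) (fun y => u y τ) x :=
          mul_le_mul_of_nonneg_left (hub1.trans hchainz) (pow_nonneg hcpos.le _)
    _ ≤ u x (τ + Nf z) := hiter (Nf z) x hx
  have hκz : κ ≤ c ^ (Nf z) * ηf z := Finset.inf'_le _ hzW
  have hub4 : κ * (δ/card) ≤ u x (τ + Nf z) := by
    apply le_trans _ hub3
    have h2 : (0:ℝ) ≤ δ/card := by positivity
    nlinarith
  -- padding in time
  have hNle : (Nf z : ℝ) ≤ (N : ℝ) := by
    exact_mod_cast Nat.cast_le.2 (Finset.le_sup hzW)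
  have hNf0 : (0:ℝ) ≤ (Nf z : ℝ) := Nat.cast_nonneg _
  have ha0 : (0:ℝ) ≤ τ + Nf z := by positivity
  have hat : τ + Nf z ≤ τ + N + s := by linarith
  have hpad := hexp x hx (τ + Nf z) (τ + N + s) ha0 hat
  have hE : Real.exp (-L * (N+1)) ≤ Real.exp (-L * ((τ + N + s) - (τ + Nf z))) := by
    apply Real.exp_le_exp.2
    nlinarith
  have hEpos : (0:ℝ) < Real.exp (-L * ((τ + N + s) - (τ + Nf z))) := Real.exp_pos _
  have huann : 0 ≤ u x (τ + Nf z) := hnn _ ha0 x hx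
  calc Real.exp (-L * (N+1)) * κ * (δ/card)
      = (κ * (δ/card)) * Real.exp (-L * (N+1)) := by ring
  _ ≤ u x (τ + Nf z) * Real.exp (-L * ((τ + N + s) - (τ + Nf z))) := by
      apply mul_le_mul hub4 hE (Real.exp_pos _).le huann
  _ ≤ u x (τ + N + s) := hpad

lemma mass {n : ℕ} (Ω : Set (Pt n)) (hO : IsOpen Ω) (hOb : Bornology.IsBounded Ω)
    (u : Pt n → ℝ → ℝ)
    (huc : ContinuousOn (fun q : Pt n × ℝ => u q.1 q.2) (closure Ω ×ˢ Set.Ici 0))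
    (CB : ℝ) (hCB : ∀ x ∈ closure Ω, ∀ t ≥ (0:ℝ), |u x t| ≤ CB)
    (hnn : ∀ t ≥ (0:ℝ), ∀ x ∈ closure Ω, 0 ≤ u x t)
    (g : Pt n → ℝ) (hg : MemLp g 2 (volume.restrict Ω))
    (hng : ¬ Tendsto (fun t => ∫ x in Ω, u x t * g x) atTop (𝓝 0)) :
    ∃ δ > 0, ∀ T : ℝ, ∃ t, max T 0 ≤ t ∧ δ ≤ ∫ y in Ω, u y t := by
  set μ := volume.restrict Ω with hμ
  haveI hfinM : IsFiniteMeasure μ := by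
    constructor
    rw [hμ, Measure.restrict_apply_univ]
    exact lt_of_le_of_lt (measure_mono subset_closure) hOb.isCompact_closure.measure_lt_top
  have gInt : Integrable g μ :=
    memLp_one_iff_integrable.1 (hg.mono_exponent (by norm_num))
  set CB' : ℝ := |CB| + 1 with hCB'
  have hCB'pos : 0 < CB' := by positivity
  have hub : ∀ t ≥ (0:ℝ), ∀ y ∈ Ω, |u y t| ≤ CB' := by
    intro t ht y hy
    exact le_trans (hCB y (subset_closure hy) t ht) (by rw [hCB']; nlinarith [le_abs_self CB])
  -- slice measurability
  have hx_slice : ∀ t : ℝ, 0 ≤ t → AEStronglyMeasurable (fun y => u y t) μ := by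
    intro t ht
    have hmap : ContinuousOn (fun x : Pt n => (x, t)) (closure Ω) :=
      (continuous_id.prodMk continuous_const).continuousOn
    have hcont : ContinuousOn (fun y => u y t) (closure Ω) :=
      huc.comp hmap (fun y hy => ⟨hy, ht⟩)
    exact (hcont.mono subset_closure).aestronglyMeasurable hO.measurableSet
  -- truncation
  have hgabs : AEMeasurable (fun y => |g y|) μ :=
    continuous_abs.measurable.comp_aemeasurable hg.aestronglyMeasurable.aemeasurable
  set ν : ℕ → ℝ := fun R => ∫ y, (|g y| - min (|g y|) R) ∂μ with hν
  have hminInt : ∀ R : ℕ, Integrable (fun y => min (|g y|) (R:ℝ)) μ := by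
    intro R
    apply Integrable.mono (integrable_const (R:ℝ)) ((hgabs.min aemeasurable_const).aestronglyMeasurable)
    filter_upwards with y
    rw [Real.norm_eq_abs, Real.norm_eq_abs]
    rw [abs_of_nonneg (le_min (abs_nonneg _) (Nat.cast_nonneg R))]
    rw [abs_of_nonneg (Nat.cast_nonneg R : (0:ℝ) ≤ R)]
    exact min_le_right _ _
  have htailInt : ∀ R : ℕ, Integrable (fun y => |g y| - min (|g y|) (R:ℝ)) μ :=
    fun R => gInt.abs.sub (hminInt R)
  have htend : Tendsto ν atTop (𝓝 0) := by
    have h0 : (0:ℝ) = ∫ y, (0:ℝ) ∂μ := by simp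
    rw [hν, h0]
    apply tendsto_integral_of_dominated_convergence (fun y => |g y|)
      (fun R => (htailInt R).aestronglyMeasurable) gInt.abs
    · intro R
      filter_upwards with y
      rw [Real.norm_eq_abs, abs_of_nonneg (sub_nonneg.2 (min_le_left _ _))]
      have : 0 ≤ min (|g y|) (R:ℝ) := le_min (abs_nonneg _) (Nat.cast_nonneg R)
      linarith
    · filter_upwards with y
      apply tendsto_atTop_of_eventually_const (i₀ := ⌈|g y|⌉₊)
      intro i hi
      have : |g y| ≤ (i:ℝ) := le_trans (Nat.le_ceil _) (by exact_mod_cast hi)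
      rw [min_eq_left this]
      ring
  -- ε from non-convergence
  have hfreq : ∃ ε > 0, ∀ T : ℝ, ∃ t ≥ T, ε ≤ |∫ x in Ω, u x t * g x| := by
    rw [Metric.tendsto_nhds] at hng
    push_neg at hng
    obtain ⟨ε, hε, hng⟩ := hng
    refine ⟨ε, hε, fun T => ?_⟩
    obtain ⟨t, ht, h2⟩ := (Filter.frequently_atTop).1 hng T
    exact ⟨t, ht, by simpa [Real.dist_eq] using h2⟩
  obtain ⟨ε, hε, hfr⟩ := hfreq
  -- choose R
  have hevent : ∀ᶠ R : ℕ in atTop, CB' * ν R < ε/2 ∧ 1 ≤ R := by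
    apply Filter.Eventually.and
    · have := (htend.const_mul CB').eventually (eventually_lt_nhds (show CB' * 0 < ε/2 by simp; positivity))
      simpa using this
    · exact Filter.eventually_ge_atTop 1
  obtain ⟨R, hR1, hR2⟩ := hevent.exists
  have hRpos : (0:ℝ) < R := by exact_mod_cast hR2
  refine ⟨ε/(2*R), by positivity, fun T => ?_⟩
  obtain ⟨t, ht, hft⟩ := hfr (max T 0)
  have ht0 : (0:ℝ) ≤ t := le_trans (le_max_right T 0) ht
  refine ⟨t, ht, ?_⟩
  -- integrability of the pieces
  have hugInt : Integrable (fun y => u y t * g y) μ := by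
    apply Integrable.mono (gInt.abs.const_mul CB') ((hx_slice t ht0).mul hg.aestronglyMeasurable)
    rw [ae_restrict_iff' hO.measurableSet]
    filter_upwards with y hy
    show ‖u y t * g y‖ ≤ ‖CB' * |g y|‖
    calc ‖u y t * g y‖ = |u y t| * |g y| := by rw [Real.norm_eq_abs, abs_mul]
    _ ≤ CB' * |g y| := mul_le_mul_of_nonneg_right (hub t ht0 y hy) (abs_nonneg _)
    _ ≤ ‖CB' * |g y|‖ := le_abs_self _
  have huminInt : Integrable (fun y => u y t * min (|g y|) (R:ℝ)) μ := by
    apply Integrable.mono ((hminInt R).const_mul CB') ((hx_slice t ht0).mul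
      ((hgabs.min aemeasurable_const).aestronglyMeasurable))
    rw [ae_restrict_iff' hO.measurableSet]
    filter_upwards with y hy
    show ‖u y t * min (|g y|) (R:ℝ)‖ ≤ ‖CB' * min (|g y|) (R:ℝ)‖
    calc ‖u y t * min (|g y|) (R:ℝ)‖ = |u y t| * |min (|g y|) (R:ℝ)| := by
          rw [Real.norm_eq_abs, abs_mul]
    _ ≤ CB' * |min (|g y|) (R:ℝ)| := mul_le_mul_of_nonneg_right (hub t ht0 y hy) (abs_nonneg _)
    _ ≤ ‖CB' * min (|g y|) (R:ℝ)‖ := by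
          rw [Real.norm_eq_abs, abs_mul, abs_of_pos hCB'pos]
  have hutailInt : Integrable (fun y => u y t * (|g y| - min (|g y|) (R:ℝ))) μ := by
    apply Integrable.mono ((htailInt R).const_mul CB') ((hx_slice t ht0).mul
      (gInt.abs.aestronglyMeasurable.sub ((hgabs.min aemeasurable_const).aestronglyMeasurable)))
    rw [ae_restrict_iff' hO.measurableSet]
    filter_upwards with y hy
    show ‖u y t * (|g y| - min (|g y|) (R:ℝ))‖ ≤ ‖CB' * (|g y| - min (|g y|) (R:ℝ))‖
    calc ‖u y t * (|g y| - min (|g y|) (R:ℝ))‖ = |u y t| * |(|g y| - min (|g y|) (R:ℝ))| := by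
          rw [Real.norm_eq_abs, abs_mul]
    _ ≤ CB' * |(|g y| - min (|g y|) (R:ℝ))| :=
          mul_le_mul_of_nonneg_right (hub t ht0 y hy) (abs_nonneg _)
    _ ≤ ‖CB' * (|g y| - min (|g y|) (R:ℝ))‖ := by
          rw [Real.norm_eq_abs, abs_mul, abs_of_pos hCB'pos]
  have huInt : Integrable (fun y => u y t) μ := by
    apply Integrable.mono (integrable_const CB') (hx_slice t ht0)
    rw [ae_restrict_iff' hO.measurableSet]
    filter_upwards with y hy
    rw [Real.norm_eq_abs, Real.norm_eq_abs, abs_of_pos hCB'pos]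
    exact hub t ht0 y hy
  -- the chain of inequalities
  have step1 : ε ≤ |∫ y, u y t * g y ∂μ| := hft
  have step2 : |∫ y, u y t * g y ∂μ| ≤ ∫ y, |u y t * g y| ∂μ := by
    simpa only [Real.norm_eq_abs] using norm_integral_le_integral_norm (μ := μ) (fun y => u y t * g y)
  have step3 : ∫ y, |u y t * g y| ∂μ = ∫ y, u y t * |g y| ∂μ := by
    rw [hμ]
    apply setIntegral_congr_fun hO.measurableSet
    intro y hy
    simp only
    rw [abs_mul, abs_of_nonneg (hnn t ht0 y (subset_closure hy))]
  have step4 : ∫ y, u y t * |g y| ∂μ =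
      (∫ y, u y t * min (|g y|) (R:ℝ) ∂μ) + ∫ y, u y t * (|g y| - min (|g y|) (R:ℝ)) ∂μ := by
    rw [← integral_add huminInt hutailInt]
    congr 1
    ext y
    ring
  have step5 : ∫ y, u y t * min (|g y|) (R:ℝ) ∂μ ≤ (R:ℝ) * ∫ y, u y t ∂μ := by
    rw [← integral_const_mul]
    rw [hμ]
    apply setIntegral_mono_on huminInt (huInt.const_mul _) hO.measurableSet
    intro y hy
    have h1 : min (|g y|) (R:ℝ) ≤ (R:ℝ) := min_le_right _ _
    have h2 : 0 ≤ u y t := hnn t ht0 y (subset_closure hy)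
    nlinarith
  have step6 : ∫ y, u y t * (|g y| - min (|g y|) (R:ℝ)) ∂μ ≤ CB' * ν R := by
    rw [hν, ← integral_const_mul]
    rw [hμ]
    apply setIntegral_mono_on hutailInt ((htailInt R).const_mul _) hO.measurableSet
    intro y hy
    have h1 : 0 ≤ |g y| - min (|g y|) (R:ℝ) := sub_nonneg.2 (min_le_left _ _)
    have h2 : u y t ≤ CB' := le_trans (le_abs_self _) (hub t ht0 y hy)
    nlinarith
  have final : ε ≤ (R:ℝ) * ∫ y, u y t ∂μ + ε/2 := by
    calc ε ≤ |∫ y, u y t * g y ∂μ| := step1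
    _ ≤ ∫ y, |u y t * g y| ∂μ := step2
    _ = (∫ y, u y t * min (|g y|) (R:ℝ) ∂μ) + ∫ y, u y t * (|g y| - min (|g y|) (R:ℝ)) ∂μ := by
        rw [step3, step4]
    _ ≤ (R:ℝ) * ∫ y, u y t ∂μ + CB' * ν R := add_le_add step5 step6
    _ ≤ (R:ℝ) * ∫ y, u y t ∂μ + ε/2 := by linarith
  rw [hμ] at final
  rw [div_le_iff₀ (by positivity)]
  linarith

lemma comp {n : ℕ} (Ω : Set (Pt n)) (hO : IsOpen Ω) (hOb : Bornology.IsBounded Ω)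
    (p : Pt n → Pt n → ℝ) (hpc : Continuous (Function.uncurry p)) (hp0 : ∀ x y, 0 ≤ p x y)
    (M : Pt n → ℝ)
    (D bb : ℝ) (hD : 0 < D)
    (vD : Pt n → ℝ) (hvDc : ContinuousOn vD (closure Ω)) (hvD0 : ∀ x ∈ closure Ω, 0 < vD x)
    (hvDeq : ∀ x ∈ closure Ω, D * nlOp Ω p vD x + vD x * (M x - vD x) = 0)
    (u v : Pt n → ℝ → ℝ)
    (hvc : ContinuousOn (fun q : Pt n × ℝ => v q.1 q.2) (closure Ω ×ˢ Set.Ici 0))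
    (hvder : ∀ x ∈ closure Ω, ∀ t > (0:ℝ),
      HasDerivAt (v x) (D * nlOp Ω p (fun y => v y t) x + v x t * (M x - bb * u x t - v x t)) t)
    (T S : ℝ) (hT : 0 < T) (hTS : T ≤ S)
    (β β' : ℝ → ℝ) (hβd : ∀ t ∈ Icc T S, HasDerivAt β (β' t) t)
    (hinit : ∀ x ∈ closure Ω, v x T < β T * vD x)
    (hR : ∀ t ∈ Icc T S, ∀ x ∈ closure Ω,
      0 < β' t + β t * (β t - 1) * vD x + bb * u x t * β t) :
    ∀ t ∈ Icc T S, ∀ x ∈ closure Ω, v x t < β t * vD x := by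
  have hK : IsCompact (closure Ω) := hOb.isCompact_closure
  have hβc : ContinuousOn β (Icc T S) :=
    fun t ht => ((hβd t ht).continuousAt).continuousWithinAt
  have hIccIci : Icc T S ⊆ Set.Ici (0:ℝ) := fun s hs => le_trans hT.le hs.1
  -- slice continuity for v
  have ht_slice : ∀ x ∈ closure Ω, ContinuousOn (v x) (Set.Ici 0) := by
    intro x hx
    have hmap : ContinuousOn (fun t : ℝ => (x, t)) (Set.Ici 0) :=
      (continuous_const.prodMk continuous_id).continuousOn
    exact hvc.comp hmap (fun t ht => ⟨hx, ht⟩)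
  have hx_slice : ∀ t : ℝ, 0 ≤ t → ContinuousOn (fun y => v y t) (closure Ω) := by
    intro t ht
    have hmap : ContinuousOn (fun x : Pt n => (x, t)) (closure Ω) :=
      (continuous_id.prodMk continuous_const).continuousOn
    exact hvc.comp hmap (fun y hy => ⟨hy, ht⟩)
  by_contra hcon
  push_neg at hcon
  obtain ⟨t0, ht0, x0, hx0, hle0⟩ := hcon
  set F : Pt n → ℝ → ℝ := fun x t => β t * vD x - v x t with hF
  set Bad : Set ℝ := {t | t ∈ Icc T S ∧ ∃ x ∈ closure Ω, F x t ≤ 0} with hBad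
  have hne : Bad.Nonempty := ⟨t0, ht0, x0, hx0, by simp only [hF]; linarith⟩
  have hbdd : BddBelow Bad := ⟨T, fun t ht => ht.1.1⟩
  set ts := sInf Bad with hts
  have htsIcc : ts ∈ Icc T S := by
    obtain ⟨t', ht'⟩ := id hne
    exact ⟨le_csInf hne (fun t ht => ht.1.1), le_trans (csInf_le hbdd ht') ht'.1.2⟩
  -- approximating sequence
  have hseq : ∀ i : ℕ, ∃ t, t ∈ Bad ∧ t < ts + 1/(i+1) := by
    intro i
    obtain ⟨t, ht1, ht2⟩ := Real.lt_sInf_add_pos hne (show (0:ℝ) < 1/(i+1) by positivity)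
    exact ⟨t, ht1, ht2⟩
  choose tseq htseq1 htseq2 using hseq
  have htseq3 : ∀ i, ts ≤ tseq i := fun i => csInf_le hbdd (htseq1 i)
  have htconv : Tendsto tseq atTop (𝓝 ts) := by
    apply tendsto_of_tendsto_of_tendsto_of_le_of_le tendsto_const_nhds ?_ htseq3
      (fun i => (htseq2 i).le)
    have : Tendsto (fun i : ℕ => ts + 1/(i+1 : ℝ)) atTop (𝓝 (ts + 0)) :=
      tendsto_const_nhds.add tendsto_one_div_add_atTop_nhds_zero_nat
    simpa using this
  choose xs hxs1 hxs2 using fun i => (htseq1 i).2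
  obtain ⟨xb, hxb, φi, hφmono, hconv⟩ := hK.tendsto_subseq hxs1
  -- joint continuity of F on the product
  have hFc : ContinuousOn (fun q : Pt n × ℝ => F q.1 q.2) (closure Ω ×ˢ Icc T S) := by
    apply ContinuousOn.sub
    · apply ContinuousOn.mul
      · exact hβc.comp continuous_snd.continuousOn (fun q hq => hq.2)
      · exact hvDc.comp continuous_fst.continuousOn (fun q hq => hq.1)
    · exact hvc.mono (Set.prod_mono le_rfl hIccIci)
  have hpair : Tendsto (fun i => (xs (φi i), tseq (φi i))) atTop
      (𝓝[closure Ω ×ˢ Icc T S] (xb, ts)) := by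
    rw [tendsto_nhdsWithin_iff]
    constructor
    · exact hconv.prodMk_nhds (htconv.comp hφmono.tendsto_atTop)
    · exact Eventually.of_forall (fun i => ⟨hxs1 (φi i), (htseq1 (φi i)).1⟩)
  have hFbar : F xb ts ≤ 0 := by
    have hlim : Tendsto (fun i => F (xs (φi i)) (tseq (φi i))) atTop (𝓝 (F xb ts)) :=
      (hFc.continuousWithinAt (show (xb, ts) ∈ closure Ω ×ˢ Icc T S from ⟨hxb, htsIcc⟩)).tendsto.comp hpair
    exact le_of_tendsto hlim (Eventually.of_forall fun i => hxs2 (φi i))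
  -- strictly after the initial time
  have hTlt : T < ts := by
    rcases lt_or_eq_of_le htsIcc.1 with h | h
    · exact h
    · exfalso
      have := hinit xb hxb
      rw [← h] at hFbar
      simp only [hF] at hFbar
      linarith
  -- F(·, ts) is nonnegative
  have hgood : ∀ s, T ≤ s → s < ts → ∀ y ∈ closure Ω, 0 < F y s := by
    intro s hs1 hs2 y hy
    by_contra hneg
    push_neg at hneg
    have hsmem : s ∈ Bad := ⟨⟨hs1, le_trans hs2.le htsIcc.2⟩, y, hy, hneg⟩
    exact absurd (csInf_le hbdd hsmem) (not_le.2 hs2)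
  have hFge : ∀ y ∈ closure Ω, 0 ≤ F y ts := by
    intro y hy
    have hcw : ContinuousWithinAt (fun s => F y s) (Set.Ico T ts) ts := by
      apply ContinuousWithinAt.sub
      · apply ContinuousWithinAt.mul
        · exact (hβc ts htsIcc).mono (fun s hs => ⟨hs.1, le_trans hs.2.le htsIcc.2⟩)
        · exact continuousWithinAt_const
      · exact ((ht_slice y hy) ts (le_trans hT.le htsIcc.1)).mono
          (fun s hs => le_trans hT.le hs.1)
    have hnb : (𝓝[Set.Ico T ts] ts).NeBot := by
      rw [← mem_closure_iff_nhdsWithin_neBot, closure_Ico (ne_of_lt hTlt)]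
      exact ⟨hTlt.le, le_rfl⟩
    apply ge_of_tendsto hcw.tendsto
    filter_upwards [self_mem_nhdsWithin] with s hs
    exact (hgood s hs.1 hs.2 y hy).le
  have hFzero : F xb ts = 0 := le_antisymm hFbar (hFge xb hxb)
  -- derivative analysis at (xb, ts)
  have htspos : (0:ℝ) < ts := lt_of_lt_of_le hT htsIcc.1
  have hts0 : (0:ℝ) ≤ ts := htspos.le
  have hVpos : 0 < vD xb := hvD0 xb hxb
  have hEnn : 0 ≤ ∫ y in Ω, p xb y * (β ts * vD y - v y ts) := by
    apply setIntegral_nonneg hO.measurableSet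
    intro y hy
    apply mul_nonneg (hp0 xb y)
    have := hFge y (subset_closure hy)
    simp only [hF] at this
    linarith
  have hIvD : IntegrableOn (fun y => p xb y * vD y) Ω volume :=
    integ_ker Ω hOb p hpc vD hvDc xb
  have hIv : IntegrableOn (fun y => p xb y * v y ts) Ω volume :=
    integ_ker Ω hOb p hpc (fun y => v y ts) (hx_slice ts hts0) xb
  have hsplit : (∫ y in Ω, p xb y * v y ts) =
      β ts * (∫ y in Ω, p xb y * vD y) - ∫ y in Ω, p xb y * (β ts * vD y - v y ts) := by
    have h1 : ∫ y in Ω, p xb y * (β ts * vD y - v y ts) =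
        ∫ y in Ω, (β ts * (p xb y * vD y) - p xb y * v y ts) := by
      apply integral_congr_ae
      filter_upwards with y
      ring
    rw [h1, integral_sub (hIvD.const_mul _) hIv, integral_const_mul]
    ring
  have hprof' : D * ((∫ y in Ω, p xb y * vD y) - (∫ y in Ω, p y xb) * vD xb) =
      -(vD xb * (M xb - vD xb)) := by
    have h := hvDeq xb hxb
    simp only [nlOp] at h
    linarith
  have hvxb : v xb ts = β ts * vD xb := by
    simp only [hF] at hFzero
    linarith
  have key : β' ts * vD xb -
      (D * ((∫ y in Ω, p xb y * v y ts) - (∫ y in Ω, p y xb) * v xb ts)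
        + v xb ts * (M xb - bb * u xb ts - v xb ts))
      = vD xb * (β' ts + β ts * (β ts - 1) * vD xb + bb * u xb ts * β ts)
        + D * (∫ y in Ω, p xb y * (β ts * vD y - v y ts)) := by
    rw [hsplit, hvxb]
    linear_combination (-(β ts)) * hprof'
  have hder := hvder xb hxb ts htspos
  simp only [nlOp] at hder
  set f : ℝ → ℝ := fun t => β t * vD xb - v xb t with hf
  have hH : HasDerivAt f
      (β' ts * vD xb -
        (D * ((∫ y in Ω, p xb y * v y ts) - (∫ y in Ω, p y xb) * v xb ts)
          + v xb ts * (M xb - bb * u xb ts - v xb ts))) ts :=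
    ((hβd ts htsIcc).mul_const (vD xb)).sub hder
  have hRts := hR ts htsIcc xb hxb
  have hpos : 0 < β' ts * vD xb -
      (D * ((∫ y in Ω, p xb y * v y ts) - (∫ y in Ω, p y xb) * v xb ts)
        + v xb ts * (M xb - bb * u xb ts - v xb ts)) := by
    rw [key]
    nlinarith [mul_pos hVpos hRts, mul_nonneg hD.le hEnn]
  -- slope contradiction from the left
  have hfts : f ts = 0 := by
    simp only [hF] at hFzero
    simp only [hf]
    linarith
  have hsw := hH.hasDerivWithinAt (s := Set.Iio ts)
  rw [hasDerivWithinAt_iff_tendsto_slope] at hsw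
  have hdiff : Set.Iio ts \ {ts} = Set.Iio ts := Set.diff_singleton_eq_self (by simp)
  rw [hdiff] at hsw
  have hle : β' ts * vD xb -
      (D * ((∫ y in Ω, p xb y * v y ts) - (∫ y in Ω, p y xb) * v xb ts)
        + v xb ts * (M xb - bb * u xb ts - v xb ts)) ≤ 0 := by
    apply le_of_tendsto hsw
    filter_upwards [Ioo_mem_nhdsLT_of_mem (show ts ∈ Set.Ioc T ts from ⟨hTlt, le_rfl⟩)] with s hs
    have hFs := hgood s hs.1.le hs.2 xb hxb
    rw [slope_def_field, hfts, sub_zero]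
    apply div_nonpos_of_nonneg_of_nonpos
    · simp only [hF] at hFs
      simp only [hf]
      linarith
    · linarith [hs.2]
  linarith

lemma arith1 (vmin vd bu E : ℝ) (hE : 0 < E) (hvd : vmin ≤ vd) (hvmin : 0 < vmin)
    (hbu : 0 < bu) : 0 < -vmin * E + (1+E)*((1+E)-1)*vd + bu*(1+E) := by
  nlinarith [mul_pos hbu (show (0:ℝ) < 1 + E by linarith),
    mul_le_mul_of_nonneg_left hvd hE.le,
    mul_nonneg (mul_nonneg hE.le hE.le) (le_trans hvmin.le hvd)]

lemma arith0 (CB vd vmin γ0 v1 : ℝ) (h1 : v1 ≤ CB) (hvd : 0 < vd) (hvmle : vmin ≤ vd)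
    (hγ : 0 < γ0) (hkey : γ0*vmin = CB + 2*vmin) (hvminpos : 0 < vmin) :
    v1 < (1 + γ0*1)*vd := by
  nlinarith [mul_le_mul_of_nonneg_left hvmle hγ.le]

lemma arith3 (θ vd vv : ℝ) (h : vv ≤ θ*vd) (hvd : 0 < vd) (hθ : θ < 1) :
    vv < (1 - (1-θ)/2 * 1)*vd := by nlinarith

set_option maxHeartbeats 1000000 in
lemma master {n : ℕ} (Ω : Set (Pt n)) (hO : IsOpen Ω) (hOconn : IsConnected Ω)
    (hOb : Bornology.IsBounded Ω)
    (k p : Pt n → Pt n → ℝ)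
    (hkc : Continuous (Function.uncurry k)) (hk0 : ∀ x y, 0 ≤ k x y) (hkd : ∀ x, 0 < k x x)
    (hpc : Continuous (Function.uncurry p)) (hp0 : ∀ x y, 0 ≤ p x y)
    (m M : Pt n → ℝ) (hm : ContinuousOn m (closure Ω)) (hM : ContinuousOn M (closure Ω))
    (d D b c : ℝ) (hd : 0 < d) (hD : 0 < D) (hb : 0 < b) (hc : 0 < c)
    (vD : Pt n → ℝ) (hvDc : ContinuousOn vD (closure Ω)) (hvD0 : ∀ x ∈ closure Ω, 0 < vD x)
    (hvDeq : ∀ x ∈ closure Ω, D * nlOp Ω p vD x + vD x * (M x - vD x) = 0)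
    (u v : Pt n → ℝ → ℝ)
    (huc : ContinuousOn (fun q : Pt n × ℝ => u q.1 q.2) (closure Ω ×ˢ Set.Ici 0))
    (hvc : ContinuousOn (fun q : Pt n × ℝ => v q.1 q.2) (closure Ω ×ˢ Set.Ici 0))
    (CB : ℝ) (hCB : ∀ x ∈ closure Ω, ∀ t ≥ (0:ℝ), |u x t| ≤ CB ∧ |v x t| ≤ CB)
    (hderiv : ∀ x ∈ closure Ω, ∀ t > (0:ℝ),
      HasDerivAt (u x)
        (d * nlOp Ω k (fun y => u y t) x + u x t * (m x - u x t - c * v x t)) t ∧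
      HasDerivAt (v x)
        (D * nlOp Ω p (fun y => v y t) x + v x t * (M x - b * u x t - v x t)) t)
    (hu0 : ∀ x ∈ closure Ω, 0 < u x 0)
    (g : Pt n → ℝ) (hg : MemLp g 2 (volume.restrict Ω))
    (hng : ¬ Tendsto (fun t => ∫ x in Ω, u x t * g x) atTop (𝓝 0)) :
    ∃ T : ℝ, 0 < T ∧ ∀ t ≥ T, ∀ x ∈ closure Ω, v x t < vD x := by
  have hK : IsCompact (closure Ω) := hOb.isCompact_closure
  have hKne : (closure Ω).Nonempty := by
    obtain ⟨w, hw⟩ := hOconn.nonempty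
    exact ⟨w, subset_closure hw⟩
  have hCBu : ∀ x ∈ closure Ω, ∀ t ≥ (0:ℝ), |u x t| ≤ CB := fun x hx t ht => (hCB x hx t ht).1
  have hCBv : ∀ x ∈ closure Ω, ∀ t ≥ (0:ℝ), |v x t| ≤ CB := fun x hx t ht => (hCB x hx t ht).2
  have hCB0 : 0 ≤ CB := by
    obtain ⟨x0, hx0⟩ := hKne
    exact le_trans (abs_nonneg _) (hCBu x0 hx0 0 le_rfl)
  -- slice continuity for v
  have hvx_slice : ∀ t : ℝ, 0 ≤ t → ContinuousOn (fun y => v y t) (closure Ω) := by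
    intro t ht
    have hmap : ContinuousOn (fun x : Pt n => (x, t)) (closure Ω) :=
      (continuous_id.prodMk continuous_const).continuousOn
    exact hvc.comp hmap (fun y hy => ⟨hy, ht⟩)
  -- bounds on m and k
  obtain ⟨mb, hmb0, hmb⟩ : ∃ mb, 0 ≤ mb ∧ ∀ x ∈ closure Ω, |m x| ≤ mb := by
    obtain ⟨q0, hq0, hmax⟩ := hK.exists_isMaxOn hKne (continuous_abs.comp_continuousOn hm)
    exact ⟨|m q0|, abs_nonneg _, fun x hx => hmax hx⟩
  obtain ⟨kb, hkb0, hkb⟩ : ∃ kb, 0 ≤ kb ∧ ∀ x ∈ closure Ω, ∀ y ∈ closure Ω, |k x y| ≤ kb := by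
    obtain ⟨x0, hx0⟩ := hKne
    obtain ⟨q0, hq0, hmax⟩ := (hK.prod hK).exists_isMaxOn ⟨(x0, x0), hx0, hx0⟩
      (continuous_abs.comp hkc).continuousOn
    exact ⟨|Function.uncurry k q0|, abs_nonneg _,
      fun x hx y hy => hmax (Set.mk_mem_prod hx hy)⟩
  set volR : ℝ := (volume Ω).toReal with hvolR
  have hvolR0 : 0 ≤ volR := ENNReal.toReal_nonneg
  have hvolfin : volume Ω < ⊤ :=
    lt_of_le_of_lt (measure_mono subset_closure) hK.measure_lt_top
  have hkint : ∀ x : Pt n, IntegrableOn (fun y => k y x) Ω volume := by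
    intro x
    have hcont : Continuous (fun y => k y x) := hkc.comp (continuous_id.prodMk continuous_const)
    exact (hcont.continuousOn.integrableOn_compact hK).mono_set subset_closure
  have hkyx : ∀ x ∈ closure Ω, 0 ≤ (∫ y in Ω, k y x) ∧ (∫ y in Ω, k y x) ≤ kb * volR := by
    intro x hx
    constructor
    · exact setIntegral_nonneg hO.measurableSet (fun y _ => hk0 y x)
    · calc (∫ y in Ω, k y x) ≤ ∫ _y in Ω, kb := by
            apply setIntegral_mono_on (hkint x) (integrableOn_const hvolfin.ne)
              hO.measurableSet
            intro y hy
            exact le_trans (le_abs_self _) (hkb y (subset_closure hy) x hx)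
      _ = kb * volR := by
            rw [setIntegral_const, smul_eq_mul, hvolR, measureReal_def]
            ring
  set L : ℝ := mb + CB + c*CB + d*(kb*volR) + 1 with hL
  have hL0 : 0 ≤ L := by
    rw [hL]
    nlinarith [mul_nonneg hc.le hCB0, mul_nonneg hd.le (mul_nonneg hkb0 hvolR0)]
  set σ : Pt n → ℝ → ℝ := fun x t => m x - u x t - c * v x t - d * (∫ y in Ω, k y x) with hσdef
  have hσ : ∀ x ∈ closure Ω, ∀ t ≥ (0:ℝ), |σ x t| ≤ L := by
    intro x hx t ht
    have h1 := abs_le.1 (hmb x hx)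
    have h2 := abs_le.1 (hCBu x hx t ht)
    have h3 := abs_le.1 (hCBv x hx t ht)
    have h4 := hkyx x hx
    have e3a : c * v x t ≤ c * CB := mul_le_mul_of_nonneg_left h3.2 hc.le
    have e3b : c * (-CB) ≤ c * v x t := mul_le_mul_of_nonneg_left h3.1 hc.le
    have e3c : c * (-CB) = -(c*CB) := by ring
    have e4a : d * (∫ y in Ω, k y x) ≤ d * (kb * volR) := mul_le_mul_of_nonneg_left h4.2 hd.le
    have e4b : 0 ≤ d * (∫ y in Ω, k y x) := mul_nonneg hd.le h4.1
    have ecb : 0 ≤ c * CB := mul_nonneg hc.le hCB0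
    rw [abs_le]
    constructor
    · simp only [hσdef, hL]
      linarith
    · simp only [hσdef, hL]
      linarith
  have hderU : ∀ x ∈ closure Ω, ∀ t > (0:ℝ),
      HasDerivAt (u x) (d * (∫ y in Ω, k x y * u y t) + u x t * σ x t) t := by
    intro x hx t ht
    have h := (hderiv x hx t ht).1
    convert h using 1
    simp only [nlOp, hσdef]
    ring
  have hderV : ∀ x ∈ closure Ω, ∀ t > (0:ℝ),
      HasDerivAt (v x) (D * nlOp Ω p (fun y => v y t) x + v x t * (M x - b * u x t - v x t)) t :=
    fun x hx t ht => (hderiv x hx t ht).2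
  have hexp := pos Ω hO hOb k hkc hk0 u huc hu0 d hd σ L hσ hderU
  have hupos : ∀ t ≥ (0:ℝ), ∀ x ∈ closure Ω, 0 < u x t := by
    intro t ht x hx
    have h := hexp x hx 0 t le_rfl ht
    have h2 : 0 < u x 0 * Real.exp (-L * (t - 0)) := mul_pos (hu0 x hx) (Real.exp_pos _)
    linarith
  have hnn : ∀ t ≥ (0:ℝ), ∀ x ∈ closure Ω, 0 ≤ u x t :=
    fun t ht x hx => (hupos t ht x hx).le
  -- mass and spreading
  obtain ⟨δ, hδ, hmass⟩ := mass Ω hO hOb u huc CB hCBu hnn g hg hng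
  obtain ⟨ρ, hρ, k₀, hk₀, hker⟩ := kerpos Ω hOb hKne k hkc hkd
  obtain ⟨N, hN1, μ0, hμ0, hspread⟩ := spread Ω hO hOconn hOb k hkc hk0 ρ k₀ hρ hk₀ hker
    u huc d hd σ L hL0 hσ hderU hnn hexp δ hδ
  -- vD bounds
  obtain ⟨xm, hxmK, hxmmin⟩ := hK.exists_isMinOn hKne hvDc
  set vmin : ℝ := vD xm with hvmindef
  have hvminpos : 0 < vmin := hvD0 xm hxmK
  have hvminle : ∀ x ∈ closure Ω, vmin ≤ vD x := fun x hx => hxmmin hx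
  obtain ⟨xM, hxMK, hxMmax⟩ := hK.exists_isMaxOn hKne hvDc
  set Vm : ℝ := vD xM with hVmdef
  have hVmpos : 0 < Vm := hvD0 xM hxMK
  have hVmge : ∀ x ∈ closure Ω, vD x ≤ Vm := fun x hx => hxMmax hx
  -- Phase 1: decay towards vD from above
  set γ0 : ℝ := CB/vmin + 2 with hγ0def
  have hγ0pos : 0 < γ0 := by
    have h1 : 0 ≤ CB/vmin := div_nonneg hCB0 hvminpos.le
    rw [hγ0def]
    linarith
  have hβ1d : ∀ t : ℝ, HasDerivAt (fun s => 1 + γ0 * Real.exp (-vmin * (s - 1)))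
      (-vmin * (γ0 * Real.exp (-vmin * (t - 1)))) t := by
    intro t
    have h1 : HasDerivAt (fun s : ℝ => -vmin * (s - 1)) (-vmin) t := by
      simpa using ((hasDerivAt_id t).sub_const 1).const_mul (-vmin)
    have h2 := (Real.hasDerivAt_exp _).comp t h1
    have h3 := (h2.const_mul γ0).const_add 1
    exact h3.congr_deriv (by ring)
  have hphase1 : ∀ t, 1 ≤ t → ∀ x ∈ closure Ω,
      v x t < (1 + γ0 * Real.exp (-vmin * (t - 1))) * vD x := by
    intro t ht
    have hcmp : ∀ t' ∈ Icc (1:ℝ) t, ∀ x ∈ closure Ω,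
        v x t' < (1 + γ0 * Real.exp (-vmin * (t' - 1))) * vD x := by
      apply comp Ω hO hOb p hpc hp0 M D b hD vD hvDc hvD0 hvDeq u v hvc hderV
        1 t one_pos ht (fun s => 1 + γ0 * Real.exp (-vmin * (s - 1)))
        (fun s => -vmin * (γ0 * Real.exp (-vmin * (s - 1)))) (fun s _ => hβ1d s)
      · intro x hx
        have hv1 : v x 1 ≤ CB := le_trans (le_abs_self _) (hCBv x hx 1 (by norm_num))
        show v x 1 < (1 + γ0 * Real.exp (-vmin * ((1:ℝ) - 1))) * vD x
        rw [show -vmin * ((1:ℝ)-1) = 0 by ring, Real.exp_zero]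
        have hvd := hvD0 x hx
        have hvmle := hvminle x hx
        have hkey : γ0 * vmin = CB + 2*vmin := by
          rw [hγ0def]
          field_simp
        exact arith0 CB (vD x) vmin γ0 (v x 1) hv1 hvd hvmle hγ0pos hkey hvminpos
      · intro s hs x hx
        have hs0 : (0:ℝ) ≤ s := by linarith [hs.1]
        have hEpos : 0 < γ0 * Real.exp (-vmin * (s - 1)) := by positivity
        have hvd := hvD0 x hx
        have hvmle := hvminle x hx
        have hu := hupos s hs0 x hx
        exact arith1 vmin (vD x) (b * u x s) (γ0 * Real.exp (-vmin * (s - 1))) hEpos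
          hvmle hvminpos (mul_pos hb hu)
    exact fun x hx => hcmp t ⟨ht, le_rfl⟩ x hx
  -- choose a late mass time
  have hdecay : Tendsto (fun t : ℝ => γ0 * Real.exp (-vmin * (t - 1))) atTop (𝓝 0) := by
    have h0 : Tendsto (fun t : ℝ => t - 1) atTop atTop :=
      (tendsto_atTop_add_const_right atTop (-1 : ℝ) tendsto_id).congr
        (fun t => by simp only [id_eq]; ring)
    have h0' : Tendsto (fun t : ℝ => vmin * (t - 1)) atTop atTop :=
      h0.const_mul_atTop hvminpos
    have h1 : Tendsto (fun t : ℝ => -vmin * (t - 1)) atTop atBot := by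
      have := tendsto_neg_atTop_atBot.comp h0'
      apply this.congr
      intro t
      simp only [Function.comp]
      ring
    have h2 := Real.tendsto_exp_atBot.comp h1
    have h3 := h2.const_mul γ0
    simpa using h3
  have hev := (hdecay.eventually (eventually_lt_nhds (show (0:ℝ) < b*μ0/2 by positivity))).and
    (eventually_ge_atTop (1:ℝ))
  obtain ⟨Tstar, hTstar⟩ := eventually_atTop.1 hev
  obtain ⟨tm, htm1, htm2⟩ := hmass Tstar
  have htm0 : (0:ℝ) ≤ tm := le_trans (le_max_right _ _) htm1
  have htmTs : Tstar ≤ tm := le_trans (le_max_left _ _) htm1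
  set Tc : ℝ := tm + N with hTcdef
  have hNc0 : (0:ℝ) ≤ (N:ℝ) := Nat.cast_nonneg _
  have hTcTs : Tstar ≤ Tc := by rw [hTcdef]; linarith
  have hTc1 : (1:ℝ) ≤ Tc := (hTstar Tc hTcTs).2
  have hγsmall : γ0 * Real.exp (-vmin * (Tc - 1)) < b*μ0/2 := (hTstar Tc hTcTs).1
  set γTc : ℝ := γ0 * Real.exp (-vmin * (Tc - 1)) with hγTcdef
  have hγTcpos : 0 < γTc := by rw [hγTcdef]; positivity
  have hμbound : ∀ t, Tc ≤ t → t ≤ Tc + 1 → ∀ x ∈ closure Ω, μ0 ≤ u x t := by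
    intro t h1 h2 x hx
    have hs := hspread tm htm0 htm2 (t - Tc) (by rw [hTcdef] at h1 ⊢; linarith)
      (by rw [hTcdef] at h2 ⊢; linarith) x hx
    have harg : tm + (N:ℝ) + (t - Tc) = t := by rw [hTcdef]; ring
    rwa [harg] at hs
  set r2 : ℝ := b*μ0/2 with hr2def
  have hr2pos : 0 < r2 := by rw [hr2def]; positivity
  set T0 : ℝ := Tc + γTc/r2 with hT0def
  have hdiv0 : 0 ≤ γTc/r2 := div_nonneg hγTcpos.le hr2pos.le
  have hT0a : Tc ≤ T0 := by rw [hT0def]; linarith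
  have hdiv1 : γTc/r2 ≤ 1 := by
    rw [div_le_one hr2pos]
    linarith [hγsmall]
  have hT0b : T0 ≤ Tc + 1 := by rw [hT0def]; linarith
  have hTcpos : (0:ℝ) < Tc := by linarith
  have hT0pos : 0 < T0 := by linarith
  have hr2T0 : r2 * (T0 - Tc) = γTc := by
    rw [hT0def]
    field_simp
    ring
  have hβ2d : ∀ t : ℝ, HasDerivAt (fun s => 1 + γTc - r2*(s - Tc)) (-r2) t := by
    intro t
    have h1 : HasDerivAt (fun s : ℝ => r2*(s - Tc)) r2 t := by
      simpa using ((hasDerivAt_id t).sub_const Tc).const_mul r2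
    exact h1.const_sub (1 + γTc)
  have hphase2 : ∀ x ∈ closure Ω, v x T0 < vD x := by
    have hcmp : ∀ t' ∈ Icc Tc T0, ∀ x ∈ closure Ω,
        v x t' < (1 + γTc - r2*(t' - Tc)) * vD x := by
      apply comp Ω hO hOb p hpc hp0 M D b hD vD hvDc hvD0 hvDeq u v hvc hderV
        Tc T0 hTcpos hT0a (fun s => 1 + γTc - r2*(s - Tc)) (fun _ => -r2)
        (fun s _ => hβ2d s)
      · intro x hx
        have h := hphase1 Tc hTc1 x hx
        show v x Tc < (1 + γTc - r2*(Tc - Tc)) * vD x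
        rw [show (1:ℝ) + γTc - r2*(Tc - Tc) = 1 + γTc by ring, hγTcdef]
        exact h
      · intro s hs x hx
        have hu := hμbound s hs.1 (le_trans hs.2 hT0b) x hx
        have hβ2ge1 : 1 ≤ 1 + γTc - r2*(s - Tc) := by
          have h1 : r2 * (s - Tc) ≤ r2 * (T0 - Tc) :=
            mul_le_mul_of_nonneg_left (by linarith [hs.2]) hr2pos.le
          linarith [hr2T0]
        have hvd := hvD0 x hx
        have h3 : 0 ≤ (1 + γTc - r2*(s - Tc)) * ((1 + γTc - r2*(s - Tc)) - 1) * vD x :=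
          mul_nonneg (mul_nonneg (by linarith) (by linarith)) hvd.le
        have h4 : b * μ0 * 1 ≤ b * u x s * (1 + γTc - r2*(s - Tc)) := by
          apply mul_le_mul (mul_le_mul_of_nonneg_left hu hb.le) (by linarith) zero_le_one
            (mul_nonneg hb.le (le_trans hμ0.le hu))
        have h5 : b*μ0 = 2*r2 := by rw [hr2def]; ring
        linarith
    intro x hx
    have hval : v x T0 < (1 + γTc - r2*(T0 - Tc)) * vD x := hcmp T0 ⟨hT0a, le_rfl⟩ x hx
    have h1 : 1 + γTc - r2*(T0 - Tc) = 1 := by rw [hr2T0]; ring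
    rw [h1, one_mul] at hval
    exact hval
  -- the maximum ratio at time T0
  have hT00 : (0:ℝ) ≤ T0 := hT0pos.le
  have hθcont : ContinuousOn (fun x => v x T0 / vD x) (closure Ω) :=
    (hvx_slice T0 hT00).div hvDc (fun x hx => ne_of_gt (hvD0 x hx))
  obtain ⟨xs, hxsK, hxsmax⟩ := hK.exists_isMaxOn hKne hθcont
  set θ : ℝ := max (v xs T0 / vD xs) (1/2) with hθdef
  have hθhalf : (1/2:ℝ) ≤ θ := le_max_right _ _
  have hθlt1 : θ < 1 := by
    rw [hθdef]
    apply max_lt _ (by norm_num)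
    rw [div_lt_one (hvD0 xs hxsK)]
    exact hphase2 xs hxsK
  have hθub : ∀ x ∈ closure Ω, v x T0 ≤ θ * vD x := by
    intro x hx
    have h1 : v x T0 / vD x ≤ v xs T0 / vD xs := hxsmax hx
    have h2 : v x T0 / vD x ≤ θ := le_trans h1 (le_max_left _ _)
    exact (div_le_iff₀ (hvD0 x hx)).1 h2
  -- Phase 3: stay strictly below vD forever
  set γ3 : ℝ := (1 - θ)/2 with hγ3def
  have hγ3pos : 0 < γ3 := by rw [hγ3def]; linarith
  have hγ3le : γ3 ≤ 1/4 := by rw [hγ3def]; linarith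
  have hβ3d : ∀ t : ℝ, HasDerivAt (fun s => 1 - γ3 * Real.exp (-Vm * (s - T0)))
      (Vm * (γ3 * Real.exp (-Vm * (t - T0)))) t := by
    intro t
    have h1 : HasDerivAt (fun s : ℝ => -Vm * (s - T0)) (-Vm) t := by
      simpa using ((hasDerivAt_id t).sub_const T0).const_mul (-Vm)
    have h2 := (Real.hasDerivAt_exp _).comp t h1
    have h3 := (h2.const_mul γ3).const_sub 1
    exact h3.congr_deriv (by ring)
  refine ⟨T0, hT0pos, fun t ht x hx => ?_⟩
  have hcmp : ∀ t' ∈ Icc T0 t, ∀ x' ∈ closure Ω,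
      v x' t' < (1 - γ3 * Real.exp (-Vm * (t' - T0))) * vD x' := by
    apply comp Ω hO hOb p hpc hp0 M D b hD vD hvDc hvD0 hvDeq u v hvc hderV
      T0 t hT0pos ht (fun s => 1 - γ3 * Real.exp (-Vm * (s - T0)))
      (fun s => Vm * (γ3 * Real.exp (-Vm * (s - T0)))) (fun s _ => hβ3d s)
    · intro x' hx'
      have h := hθub x' hx'
      have hvd := hvD0 x' hx'
      show v x' T0 < (1 - γ3 * Real.exp (-Vm * (T0 - T0))) * vD x'
      rw [show -Vm * (T0 - T0) = 0 by ring, Real.exp_zero]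
      rw [hγ3def]
      exact arith3 θ (vD x') (v x' T0) h hvd hθlt1
    · intro s hs x' hx'
      have hs0 : 0 ≤ s := le_trans hT00 hs.1
      have hu := hupos s hs0 x' hx'
      have hvd := hvD0 x' hx'
      have hVge := hVmge x' hx'
      have hEpos : 0 < Real.exp (-Vm * (s - T0)) := Real.exp_pos _
      have hEle : Real.exp (-Vm * (s - T0)) ≤ 1 := by
        rw [← Real.exp_zero]
        apply Real.exp_le_exp.2
        have := mul_nonneg hVmpos.le (sub_nonneg.2 hs.1)
        linarith
      have hEub : γ3 * Real.exp (-Vm * (s - T0)) ≤ γ3 := by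
        have := mul_le_mul_of_nonneg_left hEle hγ3pos.le
        linarith
      have hb3pos : 0 < 1 - γ3 * Real.exp (-Vm * (s - T0)) := by linarith
      have hA : 0 ≤ (γ3 * Real.exp (-Vm * (s - T0))) *
          (Vm - (1 - γ3 * Real.exp (-Vm * (s - T0))) * vD x') := by
        apply mul_nonneg (by positivity)
        have h0 : 0 ≤ (γ3 * Real.exp (-Vm * (s - T0))) * vD x' :=
          mul_nonneg (by positivity) hvd.le
        have h1 : (1 - γ3 * Real.exp (-Vm * (s - T0))) * vD x' ≤ vD x' := by
          have hexpand : (1 - γ3 * Real.exp (-Vm * (s - T0))) * vD x'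
              = vD x' - (γ3 * Real.exp (-Vm * (s - T0))) * vD x' := by ring
          linarith [hexpand]
        linarith
      have hB : 0 < b * u x' s * (1 - γ3 * Real.exp (-Vm * (s - T0))) :=
        mul_pos (mul_pos hb hu) hb3pos
      have hkey : Vm * (γ3 * Real.exp (-Vm * (s - T0)))
          + (1 - γ3 * Real.exp (-Vm * (s - T0))) * ((1 - γ3 * Real.exp (-Vm * (s - T0))) - 1) * vD x'
          + b * u x' s * (1 - γ3 * Real.exp (-Vm * (s - T0)))
          = (γ3 * Real.exp (-Vm * (s - T0))) *
              (Vm - (1 - γ3 * Real.exp (-Vm * (s - T0))) * vD x')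
            + b * u x' s * (1 - γ3 * Real.exp (-Vm * (s - T0))) := by ring
      show 0 < Vm * (γ3 * Real.exp (-Vm * (s - T0)))
          + (1 - γ3 * Real.exp (-Vm * (s - T0))) * ((1 - γ3 * Real.exp (-Vm * (s - T0))) - 1) * vD x'
          + b * u x' s * (1 - γ3 * Real.exp (-Vm * (s - T0)))
      rw [hkey]
      linarith
  have h := hcmp t ⟨ht, le_rfl⟩ x hx
  have hvd := hvD0 x hx
  have hE3 : 0 < (γ3 * Real.exp (-Vm * (t - T0))) * vD x :=
    mul_pos (by positivity) hvd
  have hexpand : (1 - γ3 * Real.exp (-Vm * (t - T0))) * vD x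
      = vD x - (γ3 * Real.exp (-Vm * (t - T0))) * vD x := by ring
  linarith

end Stmt12Aux

theorem stmt_12 {n : ℕ} (Ω : Set (Pt n)) (hΩ : IsBoundedDomain Ω)
    (k p : Pt n → Pt n → ℝ)
    (hk : IsDispersalKernel k) (hp : IsDispersalKernel p)
    (hks : SymmKernel k) (hps : SymmKernel p)
    (m M : Pt n → ℝ)
    (hm : ContinuousOn m (closure Ω)) (hM : ContinuousOn M (closure Ω))
    (hmnc : Nonconstant Ω m) (hMnc : Nonconstant Ω M)
    (d D b c : ℝ) (hd : 0 < d) (hD : 0 < D) (hb : 0 < b) (hc : 0 < c)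
    (ud vD : Pt n → ℝ)
    (hud : SemiTrivialProfile Ω k d m ud) (hvD : SemiTrivialProfile Ω p D M vD)
    (u v : Pt n → ℝ → ℝ)
    (hsol : IsBoundedClassicalSolution Ω k p d D b c m M u v)
    (hu0 : ∀ x ∈ closure Ω, 0 < u x 0) (hv0 : ∀ x ∈ closure Ω, 0 < v x 0) :
    ((∃ g : Pt n → ℝ, MemLp g 2 (volume.restrict Ω) ∧
        ¬ Tendsto (fun t => ∫ x in Ω, u x t * g x) atTop (𝓝 0)) →
      ∃ T₁ : ℝ, 0 < T₁ ∧ ∀ t ≥ T₁, ∀ x ∈ closure Ω, v x t < vD x) ∧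
    ((∃ g : Pt n → ℝ, MemLp g 2 (volume.restrict Ω) ∧
        ¬ Tendsto (fun t => ∫ x in Ω, v x t * g x) atTop (𝓝 0)) →
      ∃ T₂ : ℝ, 0 < T₂ ∧ ∀ t ≥ T₂, ∀ x ∈ closure Ω, u x t < ud x) := by
  obtain ⟨hO, hOconn, hOb⟩ := hΩ
  obtain ⟨hkc, hk0, hkd, -, -⟩ := hk
  obtain ⟨hpc, hp0, hpd, -, -⟩ := hp
  obtain ⟨huc, hvc, ⟨CB, hCB⟩, -, hderiv⟩ := hsol
  constructor
  · rintro ⟨g, hg, hng⟩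
    exact Stmt12Aux.master Ω hO hOconn hOb k p hkc hk0 hkd hpc hp0 m M hm hM d D b c hd hD hb hc
      vD hvD.1 hvD.2.1 hvD.2.2 u v huc hvc CB hCB hderiv hu0 g hg hng
  · rintro ⟨g, hg, hng⟩
    apply Stmt12Aux.master Ω hO hOconn hOb p k hpc hp0 hpd hkc hk0 M m hM hm D d c b hD hd hc hb
      ud hud.1 hud.2.1 ?_ v u hvc huc CB (fun x hx t ht => ⟨(hCB x hx t ht).2, (hCB x hx t ht).1⟩)
      ?_ hv0 g hg hng
    · intro x hx
      have := hud.2.2 x hx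
      linarith [this]
    · intro x hx t ht
      refine ⟨?_, ?_⟩
      · have h2 := (hderiv x hx t ht).2
        convert h2 using 1
        ring
      · have h1 := (hderiv x hx t ht).1
        convert h1 using 1
        ring
end
end

section
/- Assume k and p are symmetric dispersal kernels, m, M ∈ C(Ω̄) are nonconstant, d, D, b, c > 0, and assume positive semi-trivial profiles u_d and v_D exist. Let (u,v) be a bounded classical solution of the competition system with u(x,0) > 0 and v(x,0) > 0 for all x ∈ Ω̄. (i) If u(·,t) converges weakly to 0 in L²(Ω) as t → ∞ (i.e., ∫_Ω u(x,t) g(x) dx → 0 for every g ∈ L²(Ω)), then there exists T₃ > 0 such that u(x,t) < u_d(x) for all x ∈ Ω̄ and t ≥ T₃. (ii) If v(·,t) converges weakly to 0 in L²(Ω) as t → ∞, then there exists T₄ > 0 such that v(x,t) < v_D(x) for all x ∈ Ω̄ and t ≥ T₄. -/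
open MeasureTheory Topology Filter

noncomputable section

open Set in
set_option maxHeartbeats 1000000 in
lemma decay_lemma (f g : ℝ → ℝ) (a θ ρ : ℝ) (hρ : 0 < ρ)
    (hcont : ContinuousOn f (Ici a))
    (hd : ∀ t > a, HasDerivAt f (g t) t)
    (hg : ∀ t > a, θ ≤ f t → g t ≤ -ρ) :
    ∀ t ≥ a, f t ≤ max θ (f a - ρ * (t - a)) := by
  have mono : ∀ s t : ℝ, a ≤ s → s ≤ t → (∀ r ∈ Ioo s t, θ ≤ f r) →
      f t + ρ * t ≤ f s + ρ * s := by
    intro s t has hst hθ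
    set F : ℝ → ℝ := fun r => f r + ρ * r with hF
    have hder : ∀ r ∈ Ioo s t, HasDerivAt F (g r + ρ) r := by
      intro r hr
      have hra : a < r := lt_of_le_of_lt has hr.1
      have h2 : HasDerivAt (fun y : ℝ => ρ * y) (ρ * 1) r := (hasDerivAt_id r).const_mul ρ
      have h3 := (hd r hra).add h2
      rw [mul_one] at h3
      exact h3
    have hanti : AntitoneOn F (Icc s t) := by
      apply antitoneOn_of_deriv_nonpos (convex_Icc s t)
      · apply ContinuousOn.add
        · exact hcont.mono (Icc_subset_Ici_self.trans (Ici_subset_Ici.mpr has))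
        · exact (continuous_const.mul continuous_id).continuousOn
      · rw [interior_Icc]
        intro r hr
        exact (hder r hr).differentiableAt.differentiableWithinAt
      · rw [interior_Icc]
        intro r hr
        rw [(hder r hr).deriv]
        have := hg r (lt_of_le_of_lt has hr.1) (hθ r hr)
        linarith
    have := hanti (left_mem_Icc.mpr hst) (right_mem_Icc.mpr hst) hst
    simpa [hF] using this
  intro t hta
  by_contra hcon
  push_neg at hcon
  rw [max_lt_iff] at hcon
  obtain ⟨h1, h2⟩ := hcon
  have hat : a < t := by
    rcases eq_or_lt_of_le hta with h | h
    · exfalso; rw [← h] at h2; linarith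
    · exact h
  set S : Set ℝ := Icc a t ∩ f ⁻¹' Iic θ with hS
  rcases S.eq_empty_or_nonempty with hemp | hne
  · have hθall : ∀ r ∈ Ioo a t, θ ≤ f r := by
      intro r hr
      by_contra hlt
      push_neg at hlt
      have : r ∈ S := ⟨⟨le_of_lt hr.1, le_of_lt hr.2⟩, le_of_lt hlt⟩
      rw [hemp] at this; exact this
    have := mono a t le_rfl (le_of_lt hat) hθall
    linarith
  · have hclosed : IsClosed S :=
      (hcont.mono Icc_subset_Ici_self).preimage_isClosed_of_isClosed isClosed_Icc isClosed_Iic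
    have hcomp : IsCompact S := isCompact_Icc.of_isClosed_subset hclosed inter_subset_left
    obtain ⟨s₀, hs₀S, hs₀ub⟩ := hcomp.exists_isGreatest hne
    obtain ⟨⟨has₀, hs₀t⟩, hfs₀⟩ := hs₀S
    have hs₀lt : s₀ < t := by
      rcases eq_or_lt_of_le hs₀t with h | h
      · exfalso; rw [h] at hfs₀; simp at hfs₀; linarith
      · exact h
    have hθall : ∀ r ∈ Ioo s₀ t, θ ≤ f r := by
      intro r hr
      by_contra hlt
      push_neg at hlt
      have : r ∈ S := ⟨⟨le_trans has₀ (le_of_lt hr.1), le_of_lt hr.2⟩, le_of_lt hlt⟩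
      have := hs₀ub this
      exact absurd hr.1 (not_lt.mpr this)
    have := mono s₀ t has₀ (le_of_lt hs₀lt) hθall
    have hfθ : f s₀ ≤ θ := hfs₀
    nlinarith

open Set in
set_option maxHeartbeats 1000000 in
lemma pos_lemma {n : ℕ} (Ω : Set (Pt n)) (hO : IsOpen Ω) (hb : Bornology.IsBounded Ω)
    (k : Pt n → Pt n → ℝ) (hk0 : ∀ x y, 0 ≤ k x y)
    (w a : Pt n → ℝ → ℝ) (Λ e : ℝ) (he : 0 ≤ e)
    (hcont : ContinuousOn (fun q : Pt n × ℝ => w q.1 q.2) (closure Ω ×ˢ Set.Ici 0))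
    (hΛ : ∀ x ∈ closure Ω, ∀ t ≥ (0:ℝ), -Λ ≤ a x t)
    (hd : ∀ x ∈ closure Ω, ∀ t > (0:ℝ), HasDerivAt (w x)
        (e * (∫ y in Ω, k x y * w y t) + a x t * w x t) t)
    (h0 : ∀ x ∈ closure Ω, 0 < w x 0) :
    ∀ x ∈ closure Ω, ∀ t ≥ (0:ℝ), 0 < w x t := by
  have hcl : IsCompact (closure Ω) := hb.isCompact_closure
  have hmeas : MeasurableSet Ω := hO.measurableSet
  have hcw : ∀ x ∈ closure Ω, ContinuousOn (w x) (Ici 0) := by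
    intro x hx
    exact hcont.comp (continuous_const.prodMk continuous_id).continuousOn
      (fun t ht => ⟨hx, ht⟩)
  have main : ∀ T > (0:ℝ), ∀ x ∈ closure Ω, ∀ t ∈ Icc (0:ℝ) T, 0 < w x t := by
    intro T hT
    by_contra hcon
    push_neg at hcon
    obtain ⟨xb, hxb, tb, htb, hwb⟩ := hcon
    set K : Set (Pt n × ℝ) := closure Ω ×ˢ Icc 0 T with hK
    set A : Set (Pt n × ℝ) := K ∩ (fun q : Pt n × ℝ => w q.1 q.2) ⁻¹' Iic 0 with hA
    have hKsub : K ⊆ closure Ω ×ˢ Ici 0 := prod_mono_right Icc_subset_Ici_self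
    have hKc : IsCompact K := hcl.prod isCompact_Icc
    have hKcl : IsClosed K := isClosed_closure.prod isClosed_Icc
    have hAcl : IsClosed A :=
      (hcont.mono hKsub).preimage_isClosed_of_isClosed hKcl isClosed_Iic
    have hAcp : IsCompact A := hKc.of_isClosed_subset hAcl inter_subset_left
    have hAne : A.Nonempty := ⟨(xb, tb), ⟨hxb, htb⟩, hwb⟩
    obtain ⟨t₀, ht₀mem, ht₀lb⟩ :=
      (hAcp.image continuous_snd).exists_isLeast (hAne.image _)
    obtain ⟨⟨x₀, t₀'⟩, hq₀A, hq₀eq⟩ := ht₀mem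
    obtain ⟨⟨hx₀, ht₀Icc⟩, hw₀⟩ := hq₀A
    dsimp only at hx₀ ht₀Icc ht₀lb hq₀eq
    subst hq₀eq
    simp only [Iic, mem_preimage, mem_setOf_eq] at hw₀
    have ht₀pos : 0 < t₀' := by
      rcases eq_or_lt_of_le ht₀Icc.1 with h | h
      · exfalso; rw [← h] at hw₀; exact absurd hw₀ (not_le.mpr (h0 x₀ hx₀))
      · exact h
    have hwpos : ∀ x ∈ closure Ω, ∀ s, 0 ≤ s → s < t₀' → 0 < w x s := by
      intro x hx s hs0 hst
      by_contra hle
      push_neg at hle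
      have hsA : (x, s) ∈ A := ⟨⟨hx, hs0, le_trans (le_of_lt hst) ht₀Icc.2⟩, hle⟩
      have : t₀' ≤ s := ht₀lb ⟨(x, s), hsA, rfl⟩
      linarith
    have hwnn : ∀ x ∈ closure Ω, ∀ s ∈ Icc 0 t₀', 0 ≤ w x s := by
      intro x hx s hs
      rcases eq_or_lt_of_le hs.2 with h | h
      · -- s = t₀' : limit from the left
        subst h
        have htd : Tendsto (w x) (𝓝[Ioo 0 s] s) (𝓝 (w x s)) :=
          ((hcw x hx) s hs.1).mono_left (nhdsWithin_mono _ (fun r hr => le_of_lt hr.1))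
        have : (𝓝[Ioo (0:ℝ) s] s).NeBot := right_nhdsWithin_Ioo_neBot (by linarith [hs.1, ht₀pos] : (0:ℝ) < s)
        refine ge_of_tendsto htd ?_
        filter_upwards [self_mem_nhdsWithin] with r hr
        exact le_of_lt (hwpos x hx r (le_of_lt hr.1) hr.2)
      · exact le_of_lt (hwpos x hx s hs.1 h)
    -- monotone exp-weighted function
    set g : ℝ → ℝ := fun s => w x₀ s * Real.exp (Λ * s) with hg
    have hgd : ∀ s ∈ Ioo (0:ℝ) t₀', HasDerivAt g
        ((e * (∫ y in Ω, k x₀ y * w y s) + a x₀ s * w x₀ s) * Real.exp (Λ * s)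
          + w x₀ s * (Real.exp (Λ * s) * Λ)) s := by
      intro s hs
      have h1 : HasDerivAt (fun r : ℝ => Real.exp (Λ * r)) (Real.exp (Λ * s) * Λ) s := by
        have : HasDerivAt (fun r : ℝ => Λ * r) Λ s := by
          simpa using (hasDerivAt_id s).const_mul Λ
        simpa using this.exp
      exact (hd x₀ hx₀ s hs.1).mul h1
    have hgmono : MonotoneOn g (Icc 0 t₀') := by
      apply monotoneOn_of_deriv_nonneg (convex_Icc _ _)
      · exact ((hcw x₀ hx₀).mono Icc_subset_Ici_self).mul
          (Real.continuous_exp.comp (continuous_const.mul continuous_id)).continuousOn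
      · rw [interior_Icc]
        intro s hs
        exact (hgd s hs).differentiableAt.differentiableWithinAt
      · rw [interior_Icc]
        intro s hs
        rw [(hgd s hs).deriv]
        have hI : 0 ≤ ∫ y in Ω, k x₀ y * w y s := by
          apply setIntegral_nonneg hmeas
          intro y hy
          exact mul_nonneg (hk0 x₀ y) (hwnn y (subset_closure hy) s ⟨le_of_lt hs.1, le_of_lt hs.2⟩)
        have hws : 0 ≤ w x₀ s := hwnn x₀ hx₀ s ⟨le_of_lt hs.1, le_of_lt hs.2⟩
        have haw : 0 ≤ (a x₀ s + Λ) * w x₀ s :=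
          mul_nonneg (by linarith [hΛ x₀ hx₀ s (le_of_lt hs.1)]) hws
        have hexp : 0 < Real.exp (Λ * s) := Real.exp_pos _
        nlinarith [mul_nonneg he hI]
    have h1 : g 0 ≤ g t₀' :=
      hgmono ⟨le_rfl, le_of_lt ht₀pos⟩ ⟨le_of_lt ht₀pos, le_rfl⟩ (le_of_lt ht₀pos)
    have hg0 : 0 < g 0 := by
      simp only [hg, mul_zero, Real.exp_zero, mul_one]
      exact h0 x₀ hx₀
    have hgt : g t₀' ≤ 0 := by
      have := Real.exp_pos (Λ * t₀')
      exact mul_nonpos_of_nonpos_of_nonneg hw₀ (le_of_lt this)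
    linarith
  intro x hx t ht
  have := main (t + 1) (by linarith) x hx t ⟨ht, by linarith⟩
  exact this

open Set in
lemma slice_cont_x {n : ℕ} {Ω : Set (Pt n)} {u : Pt n → ℝ → ℝ}
    (hucont : ContinuousOn (fun q : Pt n × ℝ => u q.1 q.2) (closure Ω ×ˢ Set.Ici 0))
    {t : ℝ} (ht : 0 ≤ t) : ContinuousOn (fun y => u y t) (closure Ω) :=
  hucont.comp (continuous_id.prodMk continuous_const).continuousOn (fun y hy => ⟨hy, ht⟩)

lemma slice_cont_t {n : ℕ} {Ω : Set (Pt n)} {u : Pt n → ℝ → ℝ}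
    (hucont : ContinuousOn (fun q : Pt n × ℝ => u q.1 q.2) (closure Ω ×ˢ Set.Ici 0))
    {x : Pt n} (hx : x ∈ closure Ω) : ContinuousOn (u x) (Set.Ici 0) :=
  hucont.comp (continuous_const.prodMk continuous_id).continuousOn (fun s hs => ⟨hx, hs⟩)

open Set in
set_option maxHeartbeats 1000000 in
lemma unifJ {n : ℕ} (Ω : Set (Pt n)) (hO : IsOpen Ω) (hbd : Bornology.IsBounded Ω)
    (hne : Ω.Nonempty)
    (k : Pt n → Pt n → ℝ) (hkc : Continuous (Function.uncurry k))
    (u : Pt n → ℝ → ℝ) (C : ℝ) (hC : ∀ x ∈ closure Ω, ∀ t ≥ (0:ℝ), |u x t| ≤ C)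
    (hucont : ContinuousOn (fun q : Pt n × ℝ => u q.1 q.2) (closure Ω ×ˢ Set.Ici 0))
    (hW : ∀ g : Pt n → ℝ, MemLp g 2 (volume.restrict Ω) →
        Tendsto (fun t => ∫ x in Ω, u x t * g x) atTop (𝓝 0)) :
    ∀ ρ > (0:ℝ), ∃ T ≥ (1:ℝ), ∀ t ≥ T, ∀ x ∈ closure Ω, |∫ y in Ω, k x y * u y t| ≤ ρ := by
  intro ρ hρ
  have hcl : IsCompact (closure Ω) := hbd.isCompact_closure
  have hclne : (closure Ω).Nonempty := hne.closure
  have hmeas : MeasurableSet Ω := hO.measurableSet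
  have hfin : volume (closure Ω) < ⊤ := hcl.measure_lt_top
  have hfinΩ : volume Ω < ⊤ := lt_of_le_of_lt (measure_mono subset_closure) hfin
  haveI : IsFiniteMeasure (volume.restrict Ω) :=
    ⟨by rw [Measure.restrict_apply_univ]; exact hfinΩ⟩
  set V : ℝ := (volume Ω).toReal with hV
  have hVnn : 0 ≤ V := ENNReal.toReal_nonneg
  have hC0 : 0 ≤ C := by
    obtain ⟨x, hx⟩ := hne
    exact le_trans (abs_nonneg _) (hC x (subset_closure hx) 0 le_rfl)
  set ε₂ : ℝ := ρ / (2 * (C * V + 1)) with hε₂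
  have hε₂pos : 0 < ε₂ := by positivity
  -- uniform continuity of k on the compact square
  have huc := (hcl.prod hcl).uniformContinuousOn_of_continuous hkc.continuousOn
  rw [Metric.uniformContinuousOn_iff] at huc
  obtain ⟨δ, hδpos, hδ⟩ := huc ε₂ hε₂pos
  -- finite subcover of closure Ω by δ-balls
  obtain ⟨b', hb'sub, hb'fin, hcover⟩ := hcl.elim_finite_subcover_image
    (fun z (_ : z ∈ closure Ω) => Metric.isOpen_ball (x := z) (ε := δ))
    (fun x hx => mem_iUnion₂.mpr ⟨x, hx, Metric.mem_ball_self hδpos⟩)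
  -- each center's weak convergence
  have htend : ∀ z ∈ b', Tendsto (fun t => ∫ y in Ω, u y t * k z y) atTop (𝓝 0) := by
    intro z hz
    apply hW
    obtain ⟨B, hB⟩ := hcl.exists_bound_of_continuousOn
      ((hkc.comp (continuous_const.prodMk continuous_id)).continuousOn :
        ContinuousOn (fun y => k z y) (closure Ω))
    apply MemLp.of_bound
      ((hkc.comp (continuous_const.prodMk continuous_id)).aestronglyMeasurable) B
    filter_upwards [ae_restrict_mem hmeas] with y hy
    exact hB y (subset_closure hy)
  have hev : ∀ᶠ t in atTop, ∀ z ∈ b', |∫ y in Ω, u y t * k z y| < ρ / 2 := by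
    rw [eventually_all_finite hb'fin]
    intro z hz
    have := (htend z hz).eventually (eventually_abs_sub_lt 0 (by linarith : (0:ℝ) < ρ/2))
    simpa using this
  obtain ⟨T', hT'⟩ := eventually_atTop.mp hev
  refine ⟨max T' 1, le_max_right _ _, ?_⟩
  intro t ht x hx
  have ht1 : (1:ℝ) ≤ t := le_trans (le_max_right _ _) ht
  have ht0 : (0:ℝ) ≤ t := by linarith
  obtain ⟨z, hzb, hxz⟩ := mem_iUnion₂.mp (hcover hx)
  have hzcl : z ∈ closure Ω := hb'sub hzb
  -- integrability
  have hint : ∀ w : Pt n, w ∈ closure Ω → IntegrableOn (fun y => k w y * u y t) Ω := by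
    intro w hw
    apply (ContinuousOn.integrableOn_compact hcl ?_).mono_set subset_closure
    exact ((hkc.comp (continuous_const.prodMk continuous_id)).continuousOn).mul
      (slice_cont_x hucont ht0)
  have hz2 : |∫ y in Ω, k z y * u y t| < ρ/2 := by
    have h1 := hT' t (le_trans (le_max_left _ _) ht) z hzb
    have h2 : (∫ y in Ω, u y t * k z y) = ∫ y in Ω, k z y * u y t :=
      integral_congr_ae (Filter.Eventually.of_forall (fun y => mul_comm _ _))
    rwa [h2] at h1
  have hdiff : |(∫ y in Ω, k x y * u y t) - ∫ y in Ω, k z y * u y t| ≤ ε₂ * C * V := by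
    rw [← integral_sub (hint x hx) (hint z hzcl)]
    have hb1 : ∀ y ∈ Ω, |k x y * u y t - k z y * u y t| ≤ ε₂ * C := by
      intro y hy
      have hycl : y ∈ closure Ω := subset_closure hy
      have hdk : |k x y - k z y| ≤ ε₂ := by
        have := hδ (x, y) ⟨hx, hycl⟩ (z, y) ⟨hzcl, hycl⟩ ?_
        · rw [Real.dist_eq] at this
          exact le_of_lt this
        · rw [Prod.dist_eq]
          simp only [dist_self]
          rw [sup_lt_iff]
          exact ⟨Metric.mem_ball.mp hxz, hδpos⟩
      calc |k x y * u y t - k z y * u y t| = |k x y - k z y| * |u y t| := by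
            rw [← abs_mul]; ring_nf
        _ ≤ ε₂ * C := mul_le_mul hdk (hC y hycl t ht0) (abs_nonneg _) (le_of_lt hε₂pos)
    calc |∫ y in Ω, (k x y * u y t - k z y * u y t)|
        ≤ ∫ y in Ω, |k x y * u y t - k z y * u y t| := by
          simpa [Real.norm_eq_abs] using
            norm_integral_le_integral_norm (fun y => k x y * u y t - k z y * u y t)
              (μ := volume.restrict Ω)
      _ ≤ ∫ y in Ω, ε₂ * C := by
          apply setIntegral_mono_on ((hint x hx).sub (hint z hzcl)).abs
            (integrableOn_const hfinΩ.ne) hmeas hb1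
      _ = ε₂ * C * V := by rw [setIntegral_const, smul_eq_mul, hV, measureReal_def]; ring
  have hfinal : ε₂ * C * V ≤ ρ / 2 := by
    rw [hε₂, div_mul_eq_mul_div, div_mul_eq_mul_div, div_le_div_iff₀ (by positivity) (by norm_num)]
    nlinarith [mul_nonneg hC0 hVnn]
  calc |∫ y in Ω, k x y * u y t|
      ≤ |(∫ y in Ω, k x y * u y t) - ∫ y in Ω, k z y * u y t| + |∫ y in Ω, k z y * u y t| := by
        have := abs_sub_abs_le_abs_sub (∫ y in Ω, k x y * u y t) (∫ y in Ω, k z y * u y t)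
        have h := abs_add_le ((∫ y in Ω, k x y * u y t) - ∫ y in Ω, k z y * u y t)
          (∫ y in Ω, k z y * u y t)
        simpa using h
    _ ≤ ε₂ * C * V + ρ/2 := add_le_add hdiff (le_of_lt hz2)
    _ ≤ ρ := by linarith

open Set in
set_option maxHeartbeats 1000000 in
lemma Qlb {n : ℕ} (Ω : Set (Pt n)) (hO : IsOpen Ω) (hbd : Bornology.IsBounded Ω)
    (hne : Ω.Nonempty)
    (k : Pt n → Pt n → ℝ) (hkc : Continuous (Function.uncurry k))
    (hk0 : ∀ x y, 0 ≤ k x y) (hkd : ∀ x, 0 < k x x)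
    (ud : Pt n → ℝ) (hudc : ContinuousOn ud (closure Ω))
    (hudpos : ∀ x ∈ closure Ω, 0 < ud x) :
    ∃ cQ > (0:ℝ), ∀ x ∈ closure Ω, cQ ≤ ∫ y in Ω, k x y * ud y := by
  have hcl : IsCompact (closure Ω) := hbd.isCompact_closure
  have hclne : (closure Ω).Nonempty := hne.closure
  have hmeas : MeasurableSet Ω := hO.measurableSet
  have hfin : volume (closure Ω) < ⊤ := hcl.measure_lt_top
  -- minimum of ud
  obtain ⟨xm, hxm, hmin⟩ := hcl.exists_isMinOn hclne hudc
  set δ₀ : ℝ := ud xm with hδ₀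
  have hδ₀pos : 0 < δ₀ := hudpos xm hxm
  -- for every z, a radius where k is bounded below
  have hrad : ∀ z : Pt n, ∃ r > (0:ℝ),
      ∀ x' ∈ Metric.ball z r, ∀ y ∈ Metric.ball z r, k z z / 2 < k x' y := by
    intro z
    have hopen : IsOpen ((Function.uncurry k) ⁻¹' Ioi (k z z / 2)) :=
      isOpen_Ioi.preimage hkc
    have hzz : (z, z) ∈ (Function.uncurry k) ⁻¹' Ioi (k z z / 2) := by
      simp [Function.uncurry]
      linarith [hkd z]
    obtain ⟨r, hrpos, hball⟩ := Metric.isOpen_iff.mp hopen (z, z) hzz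
    refine ⟨r, hrpos, ?_⟩
    intro x' hx' y hy
    have : (x', y) ∈ Metric.ball (z, z) r := by
      rw [← ball_prod_same]
      exact ⟨hx', hy⟩
    exact hball this
  choose r hrpos hrk using hrad
  -- integrability on Ω of the integrand
  have hint : ∀ x, IntegrableOn (fun y => k x y * ud y) Ω := by
    intro x
    apply (ContinuousOn.integrableOn_compact hcl ?_).mono_set subset_closure
    exact ((hkc.comp (continuous_const.prodMk continuous_id)).continuousOn).mul hudc
  -- per-center constant
  set cc : Pt n → ℝ := fun z => (k z z / 2) * δ₀ * (volume (Ω ∩ Metric.ball z (r z))).toReal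
    with hcc
  have hccpos : ∀ z ∈ closure Ω, 0 < cc z := by
    intro z hz
    have hWne : (Ω ∩ Metric.ball z (r z)).Nonempty := by
      rcases Metric.mem_closure_iff.mp hz (r z) (hrpos z) with ⟨y, hyΩ, hyd⟩
      exact ⟨y, hyΩ, by rwa [Metric.mem_ball, dist_comm]⟩
    have hvpos : 0 < volume (Ω ∩ Metric.ball z (r z)) :=
      (hO.inter Metric.isOpen_ball).measure_pos volume hWne
    have hvfin : volume (Ω ∩ Metric.ball z (r z)) < ⊤ :=
      lt_of_le_of_lt (measure_mono (inter_subset_left.trans subset_closure)) hfin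
    have := ENNReal.toReal_pos (ne_of_gt hvpos) (ne_of_lt hvfin)
    have := hkd z
    positivity
  -- per-center estimate
  have hest : ∀ z ∈ closure Ω, ∀ x ∈ Metric.ball z (r z) ∩ closure Ω,
      cc z ≤ ∫ y in Ω, k x y * ud y := by
    intro z hz x hx
    have hvfin : volume (Ω ∩ Metric.ball z (r z)) < ⊤ :=
      lt_of_le_of_lt (measure_mono (inter_subset_left.trans subset_closure)) hfin
    have hWsub : Ω ∩ Metric.ball z (r z) ⊆ Ω := inter_subset_left
    have step1 : (∫ y in Ω ∩ Metric.ball z (r z), k x y * ud y) ≤ ∫ y in Ω, k x y * ud y := by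
      apply setIntegral_mono_set (hint x) ?_ (HasSubset.Subset.eventuallyLE hWsub)
      filter_upwards [ae_restrict_mem hmeas] with y hy
      exact mul_nonneg (hk0 x y) (le_of_lt (hudpos y (subset_closure hy)))
    have step2 : (k z z / 2) * δ₀ * (volume (Ω ∩ Metric.ball z (r z))).toReal
        ≤ ∫ y in Ω ∩ Metric.ball z (r z), k x y * ud y := by
      have hconst : (∫ _ in Ω ∩ Metric.ball z (r z), ((k z z / 2) * δ₀ : ℝ))
          = (k z z / 2) * δ₀ * (volume (Ω ∩ Metric.ball z (r z))).toReal := by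
        rw [setIntegral_const, smul_eq_mul, mul_comm, measureReal_def]
      rw [← hconst]
      apply setIntegral_mono_on (integrableOn_const hvfin.ne)
        ((hint x).mono_set hWsub) (hO.inter Metric.isOpen_ball).measurableSet
      intro y hy
      have h1 : k z z / 2 ≤ k x y := le_of_lt (hrk z x hx.1 y hy.2)
      have h2 : δ₀ ≤ ud y := hmin (subset_closure hy.1)
      have := hudpos y (subset_closure hy.1)
      nlinarith [hkd z]
    have hccz : cc z = k z z / 2 * δ₀ * (volume (Ω ∩ Metric.ball z (r z))).toReal := rfl
    linarith [step1, step2]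
  -- finite subcover
  obtain ⟨b', hb'sub, hb'fin, hcover⟩ := hcl.elim_finite_subcover_image
    (fun z (_ : z ∈ closure Ω) => Metric.isOpen_ball (x := z) (ε := r z))
    (fun x hx => mem_iUnion₂.mpr ⟨x, hx, Metric.mem_ball_self (hrpos x)⟩)
  have hb'ne : b'.Nonempty := by
    obtain ⟨x, hx⟩ := hclne
    obtain ⟨z, hz, _⟩ := mem_iUnion₂.mp (hcover hx)
    exact ⟨z, hz⟩
  obtain ⟨z₀, hz₀, hz₀min⟩ := Set.exists_min_image b' cc hb'fin hb'ne
  refine ⟨cc z₀, hccpos z₀ (hb'sub hz₀), ?_⟩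
  intro x hx
  obtain ⟨z, hzb, hxz⟩ := mem_iUnion₂.mp (hcover hx)
  exact le_trans (hz₀min z hzb) (hest z (hb'sub hzb) x ⟨hxz, hx⟩)

open Set in
set_option maxHeartbeats 1000000 in
lemma main_half {n : ℕ} (Ω : Set (Pt n)) (hO : IsOpen Ω) (hbd : Bornology.IsBounded Ω)
    (hne : Ω.Nonempty)
    (k : Pt n → Pt n → ℝ) (hkc : Continuous (Function.uncurry k))
    (hk0 : ∀ x y, 0 ≤ k x y) (hkd : ∀ x, 0 < k x x)
    (m : Pt n → ℝ) (d c : ℝ) (hd : 0 < d) (hc : 0 < c)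
    (ud : Pt n → ℝ) (hud : SemiTrivialProfile Ω k d m ud)
    (u v : Pt n → ℝ → ℝ) (C : ℝ)
    (hC : ∀ x ∈ closure Ω, ∀ t ≥ (0:ℝ), |u x t| ≤ C)
    (hucont : ContinuousOn (fun q : Pt n × ℝ => u q.1 q.2) (closure Ω ×ˢ Set.Ici 0))
    (hderiv : ∀ x ∈ closure Ω, ∀ t > (0:ℝ), HasDerivAt (u x)
        (d * nlOp Ω k (fun y => u y t) x + u x t * (m x - u x t - c * v x t)) t)
    (hvnn : ∀ x ∈ closure Ω, ∀ t ≥ (0:ℝ), 0 ≤ v x t)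
    (hW : ∀ g : Pt n → ℝ, MemLp g 2 (volume.restrict Ω) →
        Tendsto (fun t => ∫ x in Ω, u x t * g x) atTop (𝓝 0)) :
    ∃ T : ℝ, 0 < T ∧ ∀ t ≥ T, ∀ x ∈ closure Ω, u x t < ud x := by
  obtain ⟨hudc, hudpos, hudeq⟩ := hud
  have hcl : IsCompact (closure Ω) := hbd.isCompact_closure
  have hclne : (closure Ω).Nonempty := hne.closure
  obtain ⟨xm, hxm, hmin⟩ := hcl.exists_isMinOn hclne hudc
  obtain ⟨xM, hxM, hmax⟩ := hcl.exists_isMaxOn hclne hudc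
  set δ₀ : ℝ := ud xm with hδ₀def
  set udM : ℝ := ud xM with hudMdef
  have hδ₀pos : 0 < δ₀ := hudpos xm hxm
  have hδ₀M : δ₀ ≤ udM := hmin hxM
  have hudMpos : 0 < udM := lt_of_lt_of_le hδ₀pos hδ₀M
  obtain ⟨cQ, hcQpos, hQ⟩ := Qlb Ω hO hbd hne k hkc hk0 hkd ud hudc hudpos
  set β : ℝ := d * cQ / udM with hβdef
  have hβpos : 0 < β := by positivity
  set ρ : ℝ := δ₀ * β / 8 with hρdef
  have hρpos : 0 < ρ := by positivity
  obtain ⟨T₀, hT₀1, hJ⟩ := unifJ Ω hO hbd hne k hkc u C hC hucont hW (ρ/d) (by positivity)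
  have hC0 : 0 ≤ C := by
    obtain ⟨x, hx⟩ := hclne
    exact le_trans (abs_nonneg _) (hC x hx 0 le_rfl)
  set θ : Pt n → ℝ := fun x => max (ud x - β/2) (δ₀/2) with hθdef
  -- derivative bound
  have hVb : ∀ x ∈ closure Ω, ∀ t ≥ T₀, θ x ≤ u x t →
      d * nlOp Ω k (fun y => u y t) x + u x t * (m x - u x t - c * v x t) ≤ -ρ := by
    intro x hx t ht hθx
    have ht0 : (0:ℝ) ≤ t := by linarith
    have hid : d * ((∫ y in Ω, k x y * ud y) - (∫ y in Ω, k y x) * ud x)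
        + ud x * (m x - ud x) = 0 := hudeq x hx
    simp only [nlOp]
    set J : ℝ := ∫ y in Ω, k x y * u y t with hJdef
    set Q : ℝ := ∫ y in Ω, k x y * ud y with hQdef
    set κ : ℝ := ∫ y in Ω, k y x with hκdef
    set U : ℝ := u x t with hUdef
    set W : ℝ := ud x with hWdef
    set vv : ℝ := v x t with hvvdef
    have hW0 : 0 < W := hudpos x hx
    have hWM : W ≤ udM := hmax hx
    have hQc : cQ ≤ Q := hQ x hx
    have hJb : |J| ≤ ρ/d := hJ t ht x hx
    have hdJ : d * J ≤ ρ := by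
      have h1 : J ≤ ρ/d := le_trans (le_abs_self _) hJb
      calc d * J ≤ d * (ρ/d) := by nlinarith
        _ = ρ := by field_simp
    have hU1 : W - β/2 ≤ U := le_trans (le_max_left _ _) hθx
    have hU2 : δ₀/2 ≤ U := le_trans (le_max_right _ _) hθx
    have hUnn : 0 ≤ U := by linarith
    have hvv0 : 0 ≤ vv := hvnn x hx t ht0
    have hδW : δ₀ ≤ W := hmin hx
    have hβM : β * udM = d * cQ := by
      rw [hβdef]; field_simp
    have hkey : W * (d * (J - κ * U) + U * (m x - U - c * vv))
        = W * (d*J) - d*Q*U + U*W*(W-U) - c*(W*U*vv) := by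
      linear_combination U * hid
    have b1 : W * (d*J) ≤ W * ρ := mul_le_mul_of_nonneg_left hdJ hW0.le
    have b2 : d*cQ*U ≤ d*Q*U :=
      mul_le_mul_of_nonneg_right (by nlinarith) hUnn
    have b3 : U*W*(W-U) ≤ U*W*(β/2) :=
      mul_le_mul_of_nonneg_left (by linarith) (mul_nonneg hUnn hW0.le)
    have b4 : 0 ≤ c*(W*U*vv) := by positivity
    have b5 : β * W ≤ β * udM := mul_le_mul_of_nonneg_left hWM hβpos.le
    have b6 : U*W*(β/2) - d*cQ*U ≤ -(U*(β*W/2)) := by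
      rw [← hβM]
      nlinarith [mul_le_mul_of_nonneg_left b5 hUnn]
    have b7 : (δ₀/2)*(β*W/2) ≤ U*(β*W/2) :=
      mul_le_mul_of_nonneg_right hU2 (by positivity)
    have hWE : W * (d * (J - κ * U) + U * (m x - U - c * vv)) ≤ W * (-ρ) := by
      rw [hkey]
      have : (δ₀/2)*(β*W/2) = 2 * ρ * W := by rw [hρdef]; ring
      linarith
    have := le_of_mul_le_mul_left hWE hW0
    linarith [this]
  -- conclusion
  refine ⟨T₀ + (C+1)/ρ, by positivity, ?_⟩
  intro t ht x hx
  have hT₀0 : (0:ℝ) ≤ T₀ := by linarith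
  have hdec := decay_lemma (u x)
    (fun s => d * nlOp Ω k (fun y => u y s) x + u x s * (m x - u x s - c * v x s))
    T₀ (θ x) ρ hρpos
    ((slice_cont_t hucont hx).mono (Ici_subset_Ici.mpr hT₀0))
    (fun s hs => hderiv x hx s (by linarith))
    (fun s hs hθs => hVb x hx s (le_of_lt hs) hθs)
  have h1 := hdec t (by nlinarith [div_nonneg (by linarith : (0:ℝ) ≤ C+1) hρpos.le])
  have h2 : u x T₀ - ρ * (t - T₀) ≤ -1 := by
    have hu0 : u x T₀ ≤ C := le_trans (le_abs_self _) (hC x hx T₀ hT₀0)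
    have h3 : (C+1)/ρ ≤ t - T₀ := by linarith
    have h4 : ρ * ((C+1)/ρ) ≤ ρ * (t - T₀) := mul_le_mul_of_nonneg_left h3 hρpos.le
    rw [mul_div_cancel₀ _ (ne_of_gt hρpos)] at h4
    linarith
  have hθlt : θ x < ud x := by
    have h5 : δ₀ ≤ ud x := hδ₀def ▸ hmin hx
    exact max_lt (by linarith) (by linarith)
  have hθge : (-1:ℝ) ≤ θ x := le_trans (by linarith) (le_max_right (ud x - β/2) (δ₀/2))
  calc u x t ≤ max (θ x) (u x T₀ - ρ * (t - T₀)) := h1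
    _ ≤ θ x := max_le le_rfl (by linarith)
    _ < ud x := hθlt


set_option maxHeartbeats 1000000 in
theorem stmt_13 {n : ℕ} (Ω : Set (Pt n)) (hΩ : IsBoundedDomain Ω)
    (k p : Pt n → Pt n → ℝ)
    (hk : IsDispersalKernel k) (hp : IsDispersalKernel p)
    (hks : SymmKernel k) (hps : SymmKernel p)
    (m M : Pt n → ℝ)
    (hm : ContinuousOn m (closure Ω)) (hM : ContinuousOn M (closure Ω))
    (hmnc : Nonconstant Ω m) (hMnc : Nonconstant Ω M)
    (d D b c : ℝ) (hd : 0 < d) (hD : 0 < D) (hb : 0 < b) (hc : 0 < c)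
    (ud vD : Pt n → ℝ)
    (hud : SemiTrivialProfile Ω k d m ud) (hvD : SemiTrivialProfile Ω p D M vD)
    (u v : Pt n → ℝ → ℝ)
    (hsol : IsBoundedClassicalSolution Ω k p d D b c m M u v)
    (hu0 : ∀ x ∈ closure Ω, 0 < u x 0) (hv0 : ∀ x ∈ closure Ω, 0 < v x 0) :
    ((∀ g : Pt n → ℝ, MemLp g 2 (volume.restrict Ω) →
        Tendsto (fun t => ∫ x in Ω, u x t * g x) atTop (𝓝 0)) →
      ∃ T₃ : ℝ, 0 < T₃ ∧ ∀ t ≥ T₃, ∀ x ∈ closure Ω, u x t < ud x) ∧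
    ((∀ g : Pt n → ℝ, MemLp g 2 (volume.restrict Ω) →
        Tendsto (fun t => ∫ x in Ω, v x t * g x) atTop (𝓝 0)) →
      ∃ T₄ : ℝ, 0 < T₄ ∧ ∀ t ≥ T₄, ∀ x ∈ closure Ω, v x t < vD x) := by
  obtain ⟨hO, hconn, hbd⟩ := hΩ
  have hne : Ω.Nonempty := hconn.nonempty
  obtain ⟨hkc, hk0, hkdg, hk1, hk2⟩ := hk
  obtain ⟨hpc, hp0, hpdg, hp1, hp2⟩ := hp
  obtain ⟨hucont, hvcont, ⟨C, hC⟩, hdiff, hderiv⟩ := hsol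
  have hcl : IsCompact (closure Ω) := hbd.isCompact_closure
  have hclne : (closure Ω).Nonempty := hne.closure
  have hmeas : MeasurableSet Ω := hO.measurableSet
  have hfinΩ : volume Ω < ⊤ :=
    lt_of_le_of_lt (measure_mono subset_closure) hcl.measure_lt_top
  set V : ℝ := (volume Ω).toReal with hV
  have hVnn : (0:ℝ) ≤ V := ENNReal.toReal_nonneg
  obtain ⟨mB, hmB⟩ := hcl.exists_bound_of_continuousOn hm
  obtain ⟨MB, hMB⟩ := hcl.exists_bound_of_continuousOn hM
  obtain ⟨kB, hkB⟩ := (hcl.prod hcl).exists_bound_of_continuousOn hkc.continuousOn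
  obtain ⟨pB, hpB⟩ := (hcl.prod hcl).exists_bound_of_continuousOn hpc.continuousOn
  have hκk : ∀ x ∈ closure Ω, 0 ≤ (∫ y in Ω, k y x) ∧ (∫ y in Ω, k y x) ≤ kB * V := by
    intro x hx
    have hint : IntegrableOn (fun y => k y x) Ω := by
      apply (ContinuousOn.integrableOn_compact hcl ?_).mono_set subset_closure
      exact (hkc.comp (continuous_id.prodMk continuous_const)).continuousOn
    constructor
    · exact setIntegral_nonneg hmeas (fun y _ => hk0 y x)
    · calc (∫ y in Ω, k y x) ≤ ∫ _ in Ω, kB := by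
            apply setIntegral_mono_on hint (integrableOn_const hfinΩ.ne) hmeas
            intro y hy
            have := hkB (y, x) ⟨subset_closure hy, hx⟩
            rw [Real.norm_eq_abs] at this
            exact le_trans (le_abs_self _) this
        _ = kB * V := by rw [setIntegral_const, smul_eq_mul, mul_comm, measureReal_def]
  have hκp : ∀ x ∈ closure Ω, 0 ≤ (∫ y in Ω, p y x) ∧ (∫ y in Ω, p y x) ≤ pB * V := by
    intro x hx
    have hint : IntegrableOn (fun y => p y x) Ω := by
      apply (ContinuousOn.integrableOn_compact hcl ?_).mono_set subset_closure
      exact (hpc.comp (continuous_id.prodMk continuous_const)).continuousOn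
    constructor
    · exact setIntegral_nonneg hmeas (fun y _ => hp0 y x)
    · calc (∫ y in Ω, p y x) ≤ ∫ _ in Ω, pB := by
            apply setIntegral_mono_on hint (integrableOn_const hfinΩ.ne) hmeas
            intro y hy
            have := hpB (y, x) ⟨subset_closure hy, hx⟩
            rw [Real.norm_eq_abs] at this
            exact le_trans (le_abs_self _) this
        _ = pB * V := by rw [setIntegral_const, smul_eq_mul, mul_comm, measureReal_def]
  -- positivity of u
  have hupos : ∀ x ∈ closure Ω, ∀ t ≥ (0:ℝ), 0 < u x t := by
    apply pos_lemma Ω hO hbd k hk0 u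
      (fun x t => m x - u x t - c * v x t - d * ∫ y in Ω, k y x)
      (mB + C + c * C + d * (kB * V)) d hd.le hucont
    · intro x hx t ht
      have h1 := hmB x hx
      rw [Real.norm_eq_abs] at h1
      have hu := (hC x hx t ht).1
      have hv := (hC x hx t ht).2
      have hκ := hκk x hx
      have h2 : c * v x t ≤ c * C :=
        mul_le_mul_of_nonneg_left (le_trans (le_abs_self _) hv) hc.le
      have h3 : d * (∫ y in Ω, k y x) ≤ d * (kB * V) :=
        mul_le_mul_of_nonneg_left hκ.2 hd.le
      have h4 : -mB ≤ m x := by rw [abs_le] at h1; exact h1.1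
      have h5 : -C ≤ -(u x t) := by rw [abs_le] at hu; linarith [hu.2]
      have h6 : -(c * v x t) ≥ -(c*C) := by linarith
      linarith
    · intro x hx t ht
      have h := (hderiv x hx t ht).1
      have he : d * nlOp Ω k (fun y => u y t) x + u x t * (m x - u x t - c * v x t)
          = d * (∫ y in Ω, k x y * u y t)
            + (m x - u x t - c * v x t - d * ∫ y in Ω, k y x) * u x t := by
        simp only [nlOp]; ring
      rwa [he] at h
    · exact hu0
  -- positivity of v
  have hvpos : ∀ x ∈ closure Ω, ∀ t ≥ (0:ℝ), 0 < v x t := by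
    apply pos_lemma Ω hO hbd p hp0 v
      (fun x t => M x - b * u x t - v x t - D * ∫ y in Ω, p y x)
      (MB + b * C + C + D * (pB * V)) D hD.le hvcont
    · intro x hx t ht
      have h1 := hMB x hx
      rw [Real.norm_eq_abs] at h1
      have hu := (hC x hx t ht).1
      have hv := (hC x hx t ht).2
      have hκ := hκp x hx
      have h2 : b * u x t ≤ b * C :=
        mul_le_mul_of_nonneg_left (le_trans (le_abs_self _) hu) hb.le
      have h3 : D * (∫ y in Ω, p y x) ≤ D * (pB * V) :=
        mul_le_mul_of_nonneg_left hκ.2 hD.le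
      have h4 : -MB ≤ M x := by rw [abs_le] at h1; exact h1.1
      have h5 : -C ≤ -(v x t) := by rw [abs_le] at hv; linarith [hv.2]
      linarith
    · intro x hx t ht
      have h := (hderiv x hx t ht).2
      have he : D * nlOp Ω p (fun y => v y t) x + v x t * (M x - b * u x t - v x t)
          = D * (∫ y in Ω, p x y * v y t)
            + (M x - b * u x t - v x t - D * ∫ y in Ω, p y x) * v x t := by
        simp only [nlOp]; ring
      rwa [he] at h
    · exact hv0
  constructor
  · intro hWu
    exact main_half Ω hO hbd hne k hkc hk0 hkdg m d c hd hc ud hud u v C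
      (fun x hx t ht => (hC x hx t ht).1) hucont
      (fun x hx t ht => hderiv x hx t ht |>.1)
      (fun x hx t ht => (hvpos x hx t ht).le) hWu
  · intro hWv
    have hderiv' : ∀ x ∈ closure Ω, ∀ t > (0:ℝ), HasDerivAt (v x)
        (D * nlOp Ω p (fun y => v y t) x + v x t * (M x - v x t - b * u x t)) t := by
      intro x hx t ht
      have h := (hderiv x hx t ht).2
      have he : D * nlOp Ω p (fun y => v y t) x + v x t * (M x - b * u x t - v x t)
          = D * nlOp Ω p (fun y => v y t) x + v x t * (M x - v x t - b * u x t) := by ring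
      rwa [he] at h
    exact main_half Ω hO hbd hne p hpc hp0 hpdg M D b hD hb vD hvD v u C
      (fun x hx t ht => (hC x hx t ht).2) hvcont hderiv'
      (fun x hx t ht => (hupos x hx t ht).le) hWv

end
end

section
/- Let Ω ⊂ ℝⁿ be a nonempty bounded domain, let k be a dispersal kernel, and let d > 0, c₀ ≥ 0. Suppose u : Ω̄ × [0,∞) → ℝ is continuous and nonnegative, for each x ∈ Ω̄ the map t ↦ u(x,t) is differentiable with ∂u/∂t(x,t) ≥ d ∫_Ω k(x,y) u(y,t) dy − c₀ u(x,t) for all t ≥ 0, and u(·,0) is not identically zero on Ω̄. Then u(x,t) > 0 for every x ∈ Ω̄ and every t > 0. -/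
open MeasureTheory Topology Filter

noncomputable section

lemma pos_setIntegral {n : ℕ} {Ω : Set (Pt n)} (hopen : IsOpen Ω)
    {f : Pt n → ℝ} (hint : IntegrableOn f Ω) (hnn : ∀ y ∈ Ω, 0 ≤ f y)
    {y₀ : Pt n} (hy₀ : y₀ ∈ Ω) (hc : ContinuousAt f y₀) (hpos : 0 < f y₀) :
    0 < ∫ y in Ω, f y := by
  have hae : 0 ≤ᵐ[volume.restrict Ω] f :=
    (ae_restrict_iff' hopen.measurableSet).2 (ae_of_all _ hnn)
  rw [setIntegral_pos_iff_support_of_nonneg_ae hae hint]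
  have hev : f ⁻¹' Set.Ioi 0 ∈ 𝓝 y₀ := hc (Ioi_mem_nhds hpos)
  obtain ⟨U, hU1, hU2, hU3⟩ := mem_nhds_iff.mp hev
  have hsub : U ∩ Ω ⊆ Function.support f ∩ Ω := fun y hy =>
    ⟨ne_of_gt (hU1 hy.1), hy.2⟩
  have hpos' : 0 < volume (U ∩ Ω) := (hU2.inter hopen).measure_pos _ ⟨y₀, hU3, hy₀⟩
  exact hpos'.trans_le (measure_mono hsub)
theorem stmt_18 {n : ℕ} (Ω : Set (Pt n)) (hΩ : IsBoundedDomain Ω)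
    (k : Pt n → Pt n → ℝ) (hk : IsDispersalKernel k)
    (d c₀ : ℝ) (hd : 0 < d) (hc₀ : 0 ≤ c₀)
    (u : Pt n → ℝ → ℝ)
    (hcont : ContinuousOn (fun q : Pt n × ℝ => u q.1 q.2) (closure Ω ×ˢ Set.Ici 0))
    (hnn : ∀ x ∈ closure Ω, ∀ t : ℝ, 0 ≤ t → 0 ≤ u x t)
    (hderiv : ∀ x ∈ closure Ω, ∀ t : ℝ, 0 ≤ t →
      ∃ u' : ℝ, HasDerivWithinAt (u x) u' (Set.Ici 0) t ∧
        d * (∫ y in Ω, k x y * u y t) - c₀ * u x t ≤ u')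
    (hne : ¬ ∀ x ∈ closure Ω, u x 0 = 0) :
    ∀ x ∈ closure Ω, ∀ t : ℝ, 0 < t → 0 < u x t := by
  obtain ⟨hopen, hconn, hbdd⟩ := hΩ
  obtain ⟨hkc, hknn, hkdiag, -, -⟩ := hk
  have hKcpt : IsCompact (closure Ω) := hbdd.isCompact_closure
  have hsubcl : Ω ⊆ closure Ω := subset_closure
  have hkx : ∀ x : Pt n, Continuous (fun y => k x y) := fun x =>
    hkc.comp (Continuous.prodMk_right x)
  -- continuity of space slices
  have hslice : ∀ t : ℝ, 0 ≤ t → ContinuousOn (fun y => u y t) (closure Ω) := by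
    intro t ht
    exact hcont.comp ((continuous_id.prodMk continuous_const).continuousOn)
      (fun y hy => ⟨hy, ht⟩)
  -- continuity of time slices
  have htime : ∀ x ∈ closure Ω, ContinuousOn (u x) (Set.Ici 0) := by
    intro x hx
    exact hcont.comp ((continuous_const.prodMk continuous_id).continuousOn)
      (fun t ht => ⟨hx, ht⟩)
  -- integrability of the kernel integrand
  have hint : ∀ x : Pt n, ∀ t : ℝ, 0 ≤ t → IntegrableOn (fun y => k x y * u y t) Ω := by
    intro x t ht
    exact (((hkx x).continuousOn.mul (hslice t ht)).integrableOn_compact hKcpt).mono_set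
      hsubcl
  have hIntnn : ∀ x : Pt n, ∀ t : ℝ, 0 ≤ t → 0 ≤ ∫ y in Ω, k x y * u y t := by
    intro x t ht
    exact setIntegral_nonneg hopen.measurableSet
      (fun y hy => mul_nonneg (hknn x y) (hnn y (hsubcl hy) t ht))
  -- Step 1: monotonicity of e^{c₀ t} u(x,t)
  have hmono : ∀ x ∈ closure Ω,
      MonotoneOn (fun t => Real.exp (c₀ * t) * u x t) (Set.Ici 0) := by
    intro x hx
    have hgc : ContinuousOn (fun t => Real.exp (c₀ * t) * u x t) (Set.Ici 0) :=
      ((Real.continuous_exp.comp (continuous_const.mul continuous_id)).continuousOn).mul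
        (htime x hx)
    have key : ∀ t : ℝ, t ∈ Set.Ioi (0:ℝ) →
        ∃ g', HasDerivAt (fun t => Real.exp (c₀ * t) * u x t) g' t ∧ 0 ≤ g' := by
      intro t ht
      obtain ⟨u', hu', hge⟩ := hderiv x hx t (le_of_lt ht)
      have hu'' : HasDerivAt (u x) u' t := hu'.hasDerivAt (Ici_mem_nhds ht)
      have hexp : HasDerivAt (fun t => Real.exp (c₀ * t)) (Real.exp (c₀ * t) * c₀) t := by
        simpa [mul_comm, Function.comp_def] using
          (Real.hasDerivAt_exp (c₀ * t)).comp t ((hasDerivAt_id t).const_mul c₀)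
      refine ⟨_, hexp.mul hu'', ?_⟩
      have hI := hIntnn x t (le_of_lt ht)
      have hu0 := hnn x hx t (le_of_lt ht)
      have hE := Real.exp_pos (c₀ * t)
      nlinarith [mul_le_mul_of_nonneg_left hge hE.le,
        mul_nonneg (mul_nonneg hd.le hI) hE.le]
    refine monotoneOn_of_deriv_nonneg (convex_Ici 0) hgc ?_ ?_
    · intro t ht
      rw [interior_Ici] at ht
      obtain ⟨g', hg', -⟩ := key t ht
      exact hg'.differentiableAt.differentiableWithinAt
    · intro t ht
      rw [interior_Ici] at ht
      obtain ⟨g', hg', hg'nn⟩ := key t ht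
      rw [hg'.deriv]; exact hg'nn
  have hzero_down : ∀ x ∈ closure Ω, ∀ s t : ℝ, 0 ≤ s → s ≤ t → u x t = 0 → u x s = 0 := by
    intro x hx s t hs hst hut
    have hm := hmono x hx (Set.mem_Ici.2 hs) (Set.mem_Ici.2 (hs.trans hst)) hst
    simp only [hut, mul_zero] at hm
    have h1 : 0 ≤ Real.exp (c₀ * s) * u x s :=
      mul_nonneg (Real.exp_pos _).le (hnn x hx s hs)
    rcases mul_eq_zero.mp (le_antisymm hm h1) with h | h
    · exact absurd h (Real.exp_ne_zero _)
    · exact h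
  -- Step 2: zero propagation
  have hprop : ∀ x ∈ closure Ω, ∀ t₁ : ℝ, 0 < t₁ → u x t₁ = 0 →
      ∀ s ∈ Set.Ioo (0:ℝ) t₁, ∀ y ∈ Ω, k x y * u y s = 0 := by
    intro x hx t₁ ht₁ hu0 s hs
    have hxz : ∀ r : ℝ, 0 ≤ r → r ≤ t₁ → u x r = 0 := fun r h1 h2 =>
      hzero_down x hx r t₁ h1 h2 hu0
    obtain ⟨u', hu', hge⟩ := hderiv x hx s hs.1.le
    have hev : u x =ᶠ[𝓝 s] (fun _ => (0:ℝ)) := by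
      filter_upwards [Ioo_mem_nhds hs.1 hs.2] with r hr
      exact hxz r hr.1.le hr.2.le
    have h0 : HasDerivAt (u x) 0 s :=
      (hasDerivAt_const s (0:ℝ)).congr_of_eventuallyEq hev
    have hu'' : HasDerivAt (u x) u' s := hu'.hasDerivAt (Ici_mem_nhds hs.1)
    have hu'eq : u' = 0 := hu''.unique h0
    have hxs0 : u x s = 0 := hxz s hs.1.le hs.2.le
    rw [hu'eq, hxs0, mul_zero, sub_zero] at hge
    have hIle : (∫ y in Ω, k x y * u y s) ≤ 0 := by
      by_contra hlt
      push_neg at hlt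
      nlinarith
    have hIeq : (∫ y in Ω, k x y * u y s) = 0 := le_antisymm hIle (hIntnn x s hs.1.le)
    intro y hy
    by_contra hnez
    have hpos : 0 < k x y * u y s :=
      lt_of_le_of_ne (mul_nonneg (hknn x y) (hnn y (hsubcl hy) s hs.1.le)) (Ne.symm hnez)
    have hca : ContinuousAt (fun z => k x z * u z s) y := by
      refine ContinuousAt.mul (hkx x).continuousAt ?_
      exact (hslice s hs.1.le).continuousAt (Filter.mem_of_superset (hopen.mem_nhds hy) hsubcl)
    have := pos_setIntegral hopen (hint x s hs.1.le)
      (fun z hz => mul_nonneg (hknn x z) (hnn z (hsubcl hz) s hs.1.le)) hy hca hpos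
    linarith [hIeq ▸ this]
  -- limit helper
  have hlim : ∀ x ∈ closure Ω, ∀ t₀ : ℝ, 0 < t₀ →
      (∀ s ∈ Set.Ioo (0:ℝ) t₀, u x s = 0) → u x t₀ = 0 := by
    intro x hx t₀ ht₀ hz
    have hcw : ContinuousWithinAt (u x) (Set.Ioo 0 t₀) t₀ :=
      ((htime x hx) t₀ ht₀.le).mono (fun r hr => hr.1.le)
    have hne' : (𝓝[Set.Ioo (0:ℝ) t₀] t₀).NeBot := by
      rw [← mem_closure_iff_nhdsWithin_neBot, closure_Ioo (ne_of_lt ht₀)]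
      exact ⟨ht₀.le, le_refl _⟩
    have h1 : Tendsto (u x) (𝓝[Set.Ioo (0:ℝ) t₀] t₀) (𝓝 (u x t₀)) := hcw
    have h2 : Tendsto (u x) (𝓝[Set.Ioo (0:ℝ) t₀] t₀) (𝓝 0) := by
      refine Tendsto.congr' ?_ tendsto_const_nhds
      filter_upwards [self_mem_nhdsWithin] with r hr
      exact (hz r hr).symm
    exact tendsto_nhds_unique h1 h2
  -- Step 3: no interior zeros at positive time
  have hmain : ∀ x₀ ∈ Ω, ∀ t₀ : ℝ, 0 < t₀ → u x₀ t₀ = 0 → False := by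
    intro x₀ hx₀ t₀ ht₀ hz₀
    have hball : ∀ x, x ∈ Ω → u x t₀ = 0 →
        ∃ ε > 0, ∀ y ∈ Metric.ball x ε ∩ Ω, u y t₀ = 0 := by
      intro x hx hxz
      have hevk : (fun y => k x y) ⁻¹' Set.Ioi 0 ∈ 𝓝 x :=
        (hkx x).continuousAt (Ioi_mem_nhds (hkdiag x))
      obtain ⟨ε, hε, hbs⟩ := Metric.mem_nhds_iff.mp hevk
      refine ⟨ε, hε, fun y hy => ?_⟩
      have hkpos : 0 < k x y := hbs hy.1
      refine hlim y (hsubcl hy.2) t₀ ht₀ (fun s hs => ?_)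
      have := hprop x (hsubcl hx) t₀ ht₀ hxz s hs y hy.2
      rcases mul_eq_zero.mp this with h | h
      · exact absurd h (ne_of_gt hkpos)
      · exact h
    classical
    choose! ε hεpos hεball using hball
    set U : Set (Pt n) := ⋃ (x) (_ : x ∈ Ω ∧ u x t₀ = 0), Metric.ball x (ε x) with hU
    have hUopen : IsOpen U := isOpen_iUnion fun x => isOpen_iUnion fun _ => Metric.isOpen_ball
    set W : Set (Pt n) := Ω ∩ (fun x => u x t₀) ⁻¹' {(0:ℝ)}ᶜ with hW
    have hWopen : IsOpen W :=
      ((hslice t₀ ht₀.le).mono hsubcl).isOpen_inter_preimage hopen isOpen_compl_singleton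
    have hmemU : ∀ x ∈ Ω, u x t₀ = 0 → x ∈ U := by
      intro x hx hxz
      exact Set.mem_iUnion₂.2 ⟨x, ⟨hx, hxz⟩, Metric.mem_ball_self (hεpos x hx hxz)⟩
    have hUsub : ∀ z ∈ Ω ∩ U, u z t₀ = 0 := by
      intro z hz
      obtain ⟨x, hxmem, hzball⟩ := Set.mem_iUnion₂.1 hz.2
      exact hεball x hxmem.1 hxmem.2 z ⟨hzball, hz.1⟩
    have hcover : Ω ⊆ U ∪ W := by
      intro x hx
      by_cases hxz : u x t₀ = 0
      · exact Or.inl (hmemU x hx hxz)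
      · exact Or.inr ⟨hx, hxz⟩
    have hallzero : ∀ x ∈ Ω, u x t₀ = 0 := by
      intro x hx
      by_contra hxz
      have hWne : (Ω ∩ W).Nonempty := ⟨x, hx, hx, hxz⟩
      have hUne : (Ω ∩ U).Nonempty := ⟨x₀, hx₀, hmemU x₀ hx₀ hz₀⟩
      obtain ⟨z, hzΩ, hzU, hzW⟩ := hconn.2 U W hUopen hWopen hcover hUne hWne
      exact hzW.2 (hUsub z ⟨hzΩ, hzU⟩)
    -- then u(·,0) = 0 on Ω, hence on closure Ω
    have hz0 : ∀ x ∈ Ω, u x 0 = 0 := fun x hx =>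
      hzero_down x (hsubcl hx) 0 t₀ le_rfl ht₀.le (hallzero x hx)
    refine hne (fun x hx => ?_)
    have heq : Set.EqOn (fun y => u y 0) (fun _ => (0:ℝ)) (closure Ω) := by
      refine Set.EqOn.of_subset_closure (fun y hy => hz0 y hy) (hslice 0 le_rfl)
        continuous_const.continuousOn hsubcl subset_rfl
    exact heq hx
  -- Conclusion
  intro x hx t ht
  rcases (hnn x hx t ht.le).lt_or_eq with h | h
  · exact h
  exfalso
  have hxz : u x t = 0 := h.symm
  have hevk : (fun y => k x y) ⁻¹' Set.Ioi 0 ∈ 𝓝 x :=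
    (hkx x).continuousAt (Ioi_mem_nhds (hkdiag x))
  obtain ⟨ε, hε, hbs⟩ := Metric.mem_nhds_iff.mp hevk
  obtain ⟨y₀, hy₀b, hy₀Ω⟩ : (Metric.ball x ε ∩ Ω).Nonempty :=
    _root_.mem_closure_iff.mp hx _ Metric.isOpen_ball (Metric.mem_ball_self hε)
  have hs : t / 2 ∈ Set.Ioo (0:ℝ) t := ⟨half_pos ht, half_lt_self ht⟩
  have := hprop x hx t ht hxz (t/2) hs y₀ hy₀Ω
  rcases mul_eq_zero.mp this with h' | h'
  · exact absurd h' (ne_of_gt (hbs hy₀b))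
  · exact hmain y₀ hy₀Ω (t/2) (half_pos ht) h'
end
end
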